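/- arXiv:1707.02002 — 3 statements merged into one kernel-verified Lean document; each statement's English description precedes it below -/
import Mathlib

section
/- Let T be a tree with m edges and x a vertex of T. Then the weighted centrality D^w(x) = Σ_{y∈V(T)} deg(y)·d(x,y) satisfies D^w(x) = 2·D(x) − m, where D(x) = Σ_{y∈V(T)} d(x,y) is the centrality of x. -/
open SimpleGraph Finset

attribute [local instance] Classical.propDecidable

variable {V : Type*}

/-- Degree of a vertex as a real number. -/
noncomputable def degR [Fintype V] (G : SimpleGraph V) (x : V) : ℝ :=
  ((Finset.univ.filter fun y => G.Adj x y).card : ℝ)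

/-- Number of edges of a graph. -/
noncomputable def esize (G : SimpleGraph V) : ℕ := Nat.card G.edgeSet

/-- Dirichlet energy of a potential. -/
noncomputable def energyFn [Fintype V] (G : SimpleGraph V) (φ : V → ℝ) : ℝ :=
  (1/2) * ∑ u, ∑ v, if G.Adj u v then (φ u - φ v)^2 else 0

/-- Effective resistance between two vertices (unit resistors on edges),
via the Dirichlet variational principle: the reciprocal of the minimal energy
of a potential with value 1 at `x` and 0 at `y`. -/
noncomputable def eres [Fintype V] (G : SimpleGraph V) (x y : V) : ℝ :=
  (sInf {e : ℝ | ∃ φ : V → ℝ, φ x = 1 ∧ φ y = 0 ∧ e = energyFn G φ})⁻¹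

/-- The transition matrix of the simple random walk, killed at `y`. -/
noncomputable def hitMat [Fintype V] (G : SimpleGraph V) (y : V) : Matrix V V ℝ :=
  Matrix.of fun u v => if v = y then 0 else if G.Adj u v then (degR G u)⁻¹ else 0

/-- Expected hitting time `H_{xy}` of the simple random walk from `x` to `y`,
expressed as the sum of the survival probabilities of the walk killed at `y`. -/
noncomputable def hitting [Fintype V] (G : SimpleGraph V) (x y : V) : ℝ :=
  if x = y then 0 else ∑' k : ℕ, ∑ z, (hitMat G y ^ k) x z

/-- Resistance-centrality `R(x)`. -/
noncomputable def Rres [Fintype V] (G : SimpleGraph V) (x : V) : ℝ := ∑ y, eres G x y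

/-- Weighted resistance-centrality `R^w(x)`. -/
noncomputable def Rw [Fintype V] (G : SimpleGraph V) (x : V) : ℝ :=
  ∑ y, degR G y * eres G x y

/-- Kirchhoff index `Kf(G)`. -/
noncomputable def Kf [Fintype V] (G : SimpleGraph V) : ℝ :=
  (1/2) * ∑ x, ∑ y, eres G x y

/-- Additive degree-Kirchhoff index `Kf⁺(G)`. -/
noncomputable def KfPlus [Fintype V] (G : SimpleGraph V) : ℝ :=
  (1/2) * ∑ x, ∑ y, (degR G x + degR G y) * eres G x y

/-- Multiplicative degree-Kirchhoff index `Kf*(G)`. -/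
noncomputable def KfStar [Fintype V] (G : SimpleGraph V) : ℝ :=
  (1/2) * ∑ x, ∑ y, degR G x * degR G y * eres G x y

/-- Cover cost `CC(x) = Σ_y H_{xy}`. -/
noncomputable def coverCost [Fintype V] (G : SimpleGraph V) (x : V) : ℝ :=
  ∑ y, hitting G x y

/-- Reverse cover cost `RC(x) = Σ_y H_{yx}`. -/
noncomputable def reverseCoverCost [Fintype V] (G : SimpleGraph V) (x : V) : ℝ :=
  ∑ y, hitting G y x

/-- Centrality (transmission) `D(x) = Σ_y d(x,y)`. -/
noncomputable def Dcent [Fintype V] (G : SimpleGraph V) (x : V) : ℝ :=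
  ∑ y, (G.dist x y : ℝ)

/-- Weighted centrality `D^w(x) = Σ_y deg(y)·d(x,y)`. -/
noncomputable def Dw [Fintype V] (G : SimpleGraph V) (x : V) : ℝ :=
  ∑ y, degR G y * (G.dist x y : ℝ)

/-- Wiener index `W(G)`. -/
noncomputable def Wiener [Fintype V] (G : SimpleGraph V) : ℝ :=
  (1/2) * ∑ x, ∑ y, (G.dist x y : ℝ)

/-- `D_{T}(v)`: sum of distances from `v` to the vertices of its connected
component in `G'` (used for the branch trees of a unicyclic graph). -/
noncomputable def branchD [Fintype V] (G' : SimpleGraph V) (v : V) : ℝ :=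
  ∑ u, if G'.Reachable v u then (G'.dist v u : ℝ) else 0

/-- The set of edges of the cycle `c 0 - c 1 - ⋯ - c (l-1) - c 0`. -/
def cycleEdges {l : ℕ} [NeZero l] (c : Fin l → V) : Set (Sym2 V) :=
  Set.range fun i : Fin l => s(c i, c (i + 1))

/-- Distance from a vertex to a set of vertices. -/
noncomputable def distToSet [Fintype V] (G : SimpleGraph V) (x : V) (s : Set V) : ℕ :=
  sInf {d | ∃ y ∈ s, G.dist x y = d}

/-- `v` is the center of a star. -/
def IsStarCenter (G : SimpleGraph V) (v : V) : Prop := ∀ u, u ≠ v → G.Adj v u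

/-- `G` is a star. -/
def IsStar (G : SimpleGraph V) : Prop := ∃ v, IsStarCenter G v

/-- The lollipop graph `P_n^l` : a cycle `C_l` on `0,…,l-1` together with a
path on `l,…,n-1` attached at the cycle vertex `0`. -/
def lollipop (n l : ℕ) : SimpleGraph (Fin n) :=
  SimpleGraph.fromRel (fun a b =>
    (a.val + 1 = b.val ∧ b.val < l) ∨ (a.val = 0 ∧ b.val = l - 1) ∨
    (a.val = 0 ∧ b.val = l) ∨ (l ≤ a.val ∧ a.val + 1 = b.val))

/-- The graph `S_n^l` : a cycle `C_l` on `0,…,l-1` with `n - l` pendant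
vertices `l,…,n-1` attached at the cycle vertex `0`. -/
def starCycle (n l : ℕ) : SimpleGraph (Fin n) :=
  SimpleGraph.fromRel (fun a b =>
    (a.val + 1 = b.val ∧ b.val < l) ∨ (a.val = 0 ∧ b.val = l - 1) ∨
    (a.val = 0 ∧ l ≤ b.val))

/-- The cycle graph `C_n` on `Fin n`. -/
def cycleG (n : ℕ) : SimpleGraph (Fin n) :=
  SimpleGraph.fromRel (fun a b => a.val + 1 = b.val ∨ (a.val = 0 ∧ b.val = n - 1))


/-- Every vertex `y ≠ x` in a connected graph has a neighbor strictly closer to `x`. -/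
lemma exists_parent_aux [Fintype V] {T : SimpleGraph V} (hc : T.Connected) (x y : V)
    (h : y ≠ x) : ∃ p : V, T.Adj y p ∧ T.dist x p + 1 = T.dist x y := by
  obtain ⟨w, hw⟩ := (hc y x).exists_walk_length_eq_dist
  have hd : 0 < T.dist y x := hc.pos_dist_of_ne h
  have hnil : ¬ w.Nil := by
    intro hn
    rw [SimpleGraph.Walk.nil_iff_length_eq] at hn
    omega
  refine ⟨w.getVert 1, w.adj_snd hnil, ?_⟩
  have h1 : T.dist (w.getVert 1) x + 1 ≤ T.dist y x := by
    have h1a : T.dist (w.getVert 1) x ≤ w.tail.length := SimpleGraph.dist_le w.tail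
    have h1b := SimpleGraph.Walk.length_tail_add_one hnil
    omega
  have h2 : T.dist y x ≤ T.dist (w.getVert 1) x + 1 := by
    have h2a := hc.dist_triangle (u := y) (v := w.getVert 1) (w := x)
    have h2b : T.dist y (w.getVert 1) = 1 :=
      SimpleGraph.dist_eq_one_iff_adj.2 (w.adj_snd hnil)
    omega
  have hc1 : T.dist x y = T.dist y x := SimpleGraph.dist_comm
  have hc2 : T.dist x (w.getVert 1) = T.dist (w.getVert 1) x := SimpleGraph.dist_comm
  omega

/-- For a tree `T` with `m` edges and any vertex `x`,
`D^w(x) = 2·D(x) − m`. -/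
theorem weighted_centrality_tree [Fintype V] (T : SimpleGraph V) (hT : T.IsTree)
    (m : ℕ) (hm : esize T = m) (x : V) :
    Dw T x = 2 * Dcent T x - (m : ℝ) := by
  classical
  have hc : T.Connected := hT.isConnected
  have hne : Nonempty V := hc.nonempty
  have H : ∀ y, y ≠ x → ∃ p, T.Adj y p ∧ T.dist x p + 1 = T.dist x y :=
    fun y h => exists_parent_aux hc x y h
  choose! par hadj hdist using H
  set n := Fintype.card V with hn_def
  have hn : 1 ≤ n := Fintype.card_pos
  have hcard_edges : T.edgeFinset.card + 1 = n := hT.card_edgeFinset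
  have hm' : m = n - 1 := by
    rw [← hm, esize, Nat.card_eq_fintype_card, ← SimpleGraph.edgeFinset_card]
    omega
  set S : Finset (V × Bool) := (Finset.univ.erase x) ×ˢ (Finset.univ : Finset Bool) with hS_def
  have hScard : S.card = (n - 1) * 2 := by
    rw [hS_def, Finset.card_product, Finset.card_erase_of_mem (Finset.mem_univ x),
      Finset.card_univ, Finset.card_univ, Fintype.card_bool]
  have hDart : (Finset.univ : Finset T.Dart).card = 2 * (n - 1) := by
    rw [Finset.card_univ, SimpleGraph.dart_card_eq_twice_card_edges]
    omega
  have hmemS : ∀ p : V × Bool, p ∈ S → p.1 ≠ x := by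
    intro p hp
    rw [hS_def, Finset.mem_product] at hp
    exact Finset.ne_of_mem_erase hp.1
  set i : ∀ p : V × Bool, p ∈ S → T.Dart := fun p hp =>
    if hb : p.2 then ⟨(p.1, par p.1), hadj p.1 (hmemS p hp)⟩
    else ⟨(par p.1, p.1), (hadj p.1 (hmemS p hp)).symm⟩ with hi_def
  have hi_mem : ∀ (p : V × Bool) (hp : p ∈ S), i p hp ∈ (Finset.univ : Finset T.Dart) :=
    fun p hp => Finset.mem_univ _
  have hi_inj : ∀ (p₁ : V × Bool) (hp₁ : p₁ ∈ S) (p₂ : V × Bool) (hp₂ : p₂ ∈ S),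
      i p₁ hp₁ = i p₂ hp₂ → p₁ = p₂ := by
    intro p₁ hp₁ p₂ hp₂ heq
    have h1 := hmemS p₁ hp₁
    have h2 := hmemS p₂ hp₂
    have e1 : T.dist x (par p₁.1) + 1 = T.dist x p₁.1 := hdist p₁.1 h1
    have e2 : T.dist x (par p₂.1) + 1 = T.dist x p₂.1 := hdist p₂.1 h2
    simp only [hi_def] at heq
    by_cases hb1 : p₁.2 <;> by_cases hb2 : p₂.2
    · rw [dif_pos hb1, dif_pos hb2] at heq
      have heq2 := congrArg SimpleGraph.Dart.toProd heq
      simp only [Prod.mk.injEq] at heq2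
      exact Prod.ext heq2.1 (hb1.trans hb2.symm)
    · rw [dif_pos hb1, dif_neg hb2] at heq
      have heq2 := congrArg SimpleGraph.Dart.toProd heq
      simp only [Prod.mk.injEq] at heq2
      exfalso
      have f1 := congrArg (T.dist x) heq2.1
      have f2 := congrArg (T.dist x) heq2.2
      omega
    · rw [dif_neg hb1, dif_pos hb2] at heq
      have heq2 := congrArg SimpleGraph.Dart.toProd heq
      simp only [Prod.mk.injEq] at heq2
      exfalso
      have f1 := congrArg (T.dist x) heq2.1
      have f2 := congrArg (T.dist x) heq2.2
      omega
    · rw [dif_neg hb1, dif_neg hb2] at heq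
      have heq2 := congrArg SimpleGraph.Dart.toProd heq
      simp only [Prod.mk.injEq] at heq2
      refine Prod.ext heq2.2 ?_
      simp only [Bool.not_eq_true] at hb1 hb2
      rw [hb1, hb2]
  have hi_surj : ∀ d ∈ (Finset.univ : Finset T.Dart), ∃ p hp, d = i p hp :=
    Finset.surj_on_of_inj_on_of_card_le i hi_mem
      (fun a₁ a₂ ha₁ ha₂ h => hi_inj a₁ ha₁ a₂ ha₂ h) (by omega)
  have key : ∑ p ∈ S, (if p.2 then (T.dist x p.1 : ℝ) else (T.dist x (par p.1) : ℝ))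
      = ∑ d : T.Dart, (T.dist x d.fst : ℝ) := by
    refine Finset.sum_bij i hi_mem hi_inj (fun d hd => by
      obtain ⟨p, hp, hdp⟩ := hi_surj d hd; exact ⟨p, hp, hdp.symm⟩) ?_
    intro p hp
    rw [hi_def]
    by_cases hb : p.2 <;> simp [hb]
  have lhs_eq : ∑ p ∈ S, (if p.2 then (T.dist x p.1 : ℝ) else (T.dist x (par p.1) : ℝ))
      = ∑ y ∈ Finset.univ.erase x, (2 * (T.dist x y : ℝ) - 1) := by
    rw [hS_def, Finset.sum_product]
    refine Finset.sum_congr rfl ?_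
    intro y hy
    have hyx : y ≠ x := Finset.ne_of_mem_erase hy
    have e1 : T.dist x (par y) + 1 = T.dist x y := hdist y hyx
    have e1' : (T.dist x (par y) : ℝ) = (T.dist x y : ℝ) - 1 := by
      have h := congrArg (fun k : ℕ => (k : ℝ)) e1
      push_cast at h
      linarith
    rw [Fintype.sum_bool, if_pos rfl, if_neg Bool.false_ne_true, e1']
    ring
  have lhs_eq2 : ∑ y ∈ Finset.univ.erase x, (2 * (T.dist x y : ℝ) - 1)
      = 2 * Dcent T x - ((n - 1 : ℕ) : ℝ) := by
    rw [Finset.sum_sub_distrib, Finset.sum_const, ← Finset.mul_sum]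
    have hc1 : (Finset.univ.erase x).card = n - 1 := by
      rw [Finset.card_erase_of_mem (Finset.mem_univ x), Finset.card_univ]
    have hc2 : ∑ y ∈ Finset.univ.erase x, (T.dist x y : ℝ) = Dcent T x := by
      rw [Dcent]
      refine Finset.sum_erase _ ?_
      simp [SimpleGraph.dist_self]
    rw [hc1, hc2]
    simp
  have rhs_eq : ∑ d : T.Dart, (T.dist x d.fst : ℝ) = Dw T x := by
    rw [Dw, ← Finset.sum_fiberwise (Finset.univ : Finset T.Dart)
      (fun d : T.Dart => d.fst) (fun d : T.Dart => (T.dist x d.fst : ℝ))]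
    refine Finset.sum_congr rfl ?_
    intro y _
    have hfib : ∑ d ∈ Finset.univ.filter (fun d : T.Dart => d.fst = y),
        (T.dist x d.fst : ℝ) = ((Finset.univ.filter (fun d : T.Dart => d.fst = y)).card : ℝ)
          * (T.dist x y : ℝ) := by
      rw [Finset.sum_congr rfl (fun d hd => by
        rw [(Finset.mem_filter.mp hd).2]), Finset.sum_const, nsmul_eq_mul]
    rw [hfib]
    have hdeg : (Finset.univ.filter (fun d : T.Dart => d.fst = y)).card = T.degree y := by
      rw [← T.dart_fst_fiber_card_eq_degree y]
    have hdegR : degR T y = (T.degree y : ℝ) := by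
      have hfset : (Finset.univ.filter fun z => T.Adj y z) = T.neighborFinset y := by
        ext z; simp
      rw [degR, hfset, SimpleGraph.card_neighborFinset_eq_degree]
    rw [hdeg, hdegR]
  rw [← rhs_eq, ← key, lhs_eq, lhs_eq2, hm']
end

section
/- Let G be a connected graph with m edges and x, y ∈ V(G). Then the expected hitting time of the simple random walk satisfies H_{xy} = (1/2)·Σ_{z∈V(G)} deg(z)·(r(x,y) + r(z,y) − r(z,x)) = m·r(x,y) + (1/2)·(R^w(y) − R^w(x)). -/
open SimpleGraph Finset

attribute [local instance] Classical.propDecidable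

variable {V : Type*}

section AuxHitting
open Matrix
variable {V : Type*}

noncomputable def Lap [Fintype V] (G : SimpleGraph V) : Matrix V V ℝ :=
  Matrix.of fun u v => if u = v then degR G u else if G.Adj u v then -1 else 0

variable [Fintype V] {G : SimpleGraph V}

lemma degR_nonneg (u : V) : 0 ≤ degR G u := Nat.cast_nonneg _

lemma sum_ite_adj (u : V) (c : ℝ) : ∑ v, (if G.Adj u v then c else 0) = degR G u * c := by
  classical
  rw [← Finset.sum_filter]
  simp [degR, mul_comm]

lemma sum_ite_adj' (u : V) (f : V → ℝ) :
    ∑ v, (if G.Adj u v then f v else 0) = ∑ v ∈ Finset.univ.filter (fun v => G.Adj u v), f v := by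
  classical
  rw [← Finset.sum_filter]

lemma lap_mulVec (φ : V → ℝ) (u : V) :
    (Lap G *ᵥ φ) u = degR G u * φ u - ∑ v, (if G.Adj u v then φ v else 0) := by
  classical
  simp only [Matrix.mulVec, dotProduct, Lap, Matrix.of_apply]
  have h : ∀ v, (if u = v then degR G u else if G.Adj u v then -1 else 0) * φ v
      = (if u = v then degR G u * φ v else 0) + (if G.Adj u v then -(φ v) else 0) := by
    intro v
    by_cases h : u = v
    · subst h; simp [G.irrefl]
    · by_cases h2 : G.Adj u v <;> simp [h, h2]
  rw [Finset.sum_congr rfl fun v _ => h v, Finset.sum_add_distrib]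
  rw [Finset.sum_ite_eq]
  simp only [Finset.mem_univ, if_true, sub_eq_add_neg, ← Finset.sum_neg_distrib]
  congr 1
  exact Finset.sum_congr rfl fun v _ => by by_cases h2 : G.Adj u v <;> simp [h2]

lemma energy_eq_quad (φ : V → ℝ) : φ ⬝ᵥ (Lap G *ᵥ φ) = energyFn G φ := by
  classical
  have key : ∀ u, φ u * (Lap G *ᵥ φ) u
      = ∑ v, (if G.Adj u v then φ u ^ 2 - φ u * φ v else 0) := by
    intro u
    rw [lap_mulVec, mul_sub, Finset.mul_sum]
    have h1 : φ u * (degR G u * φ u) = ∑ v, (if G.Adj u v then φ u ^ 2 else 0) := by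
      rw [sum_ite_adj]; ring
    rw [h1, ← Finset.sum_sub_distrib]
    refine Finset.sum_congr rfl fun v _ => ?_
    by_cases h2 : G.Adj u v <;> simp [h2]
  have expand : ∀ u v : V, (if G.Adj u v then (φ u - φ v)^2 else 0)
      = (if G.Adj u v then φ u ^ 2 - φ u * φ v else 0)
        + (if G.Adj v u then φ v ^ 2 - φ v * φ u else 0) := by
    intro u v
    by_cases h2 : G.Adj u v
    · simp [h2, h2.symm]; ring
    · have h3 : ¬ G.Adj v u := fun h => h2 (G.adj_symm h)
      simp [h2, h3]
  have swap : ∑ u, ∑ v, (if G.Adj v u then φ v ^ 2 - φ v * φ u else 0)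
      = ∑ u, ∑ v, (if G.Adj u v then φ u ^ 2 - φ u * φ v else 0) := Finset.sum_comm
  simp only [dotProduct]
  rw [Finset.sum_congr rfl fun u _ => key u, energyFn]
  have : ∑ u, ∑ v, (if G.Adj u v then (φ u - φ v)^2 else 0)
      = 2 * ∑ u, ∑ v, (if G.Adj u v then φ u ^ 2 - φ u * φ v else 0) := by
    calc ∑ u, ∑ v, (if G.Adj u v then (φ u - φ v)^2 else 0)
        = ∑ u, ∑ v, ((if G.Adj u v then φ u ^ 2 - φ u * φ v else 0)
            + (if G.Adj v u then φ v ^ 2 - φ v * φ u else 0)) := by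
          exact Finset.sum_congr rfl fun u _ => Finset.sum_congr rfl fun v _ => expand u v
      _ = (∑ u, ∑ v, (if G.Adj u v then φ u ^ 2 - φ u * φ v else 0))
            + ∑ u, ∑ v, (if G.Adj v u then φ v ^ 2 - φ v * φ u else 0) := by
          rw [← Finset.sum_add_distrib]
          exact Finset.sum_congr rfl fun u _ => Finset.sum_add_distrib
      _ = 2 * ∑ u, ∑ v, (if G.Adj u v then φ u ^ 2 - φ u * φ v else 0) := by
          rw [swap]; ring
  rw [this]; ring

lemma energy_nonneg (φ : V → ℝ) : 0 ≤ energyFn G φ := by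
  apply mul_nonneg (by norm_num)
  exact Finset.sum_nonneg fun u _ => Finset.sum_nonneg fun v _ => by positivity
lemma lap_apply_symm (u v : V) : Lap G u v = Lap G v u := by
  by_cases h : u = v
  · subst h; rfl
  · have h' : v ≠ u := fun hh => h hh.symm
    simp only [Lap, Matrix.of_apply, if_neg h, if_neg h', G.adj_comm u v]

lemma dot_lap_comm (φ ψ : V → ℝ) : φ ⬝ᵥ (Lap G *ᵥ ψ) = ψ ⬝ᵥ (Lap G *ᵥ φ) := by
  simp only [dotProduct, Matrix.mulVec, Finset.mul_sum]
  rw [Finset.sum_comm]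
  refine Finset.sum_congr rfl fun u _ => Finset.sum_congr rfl fun v _ => ?_
  rw [lap_apply_symm]; ring

lemma lap_mulVec_const (c : ℝ) : Lap G *ᵥ (fun _ => c) = 0 := by
  funext u
  rw [lap_mulVec, sum_ite_adj]
  simp

lemma sum_lap_mulVec (φ : V → ℝ) : ∑ u, (Lap G *ᵥ φ) u = 0 := by
  have := dot_lap_comm (G := G) (fun _ => (1:ℝ)) φ
  rw [lap_mulVec_const] at this
  simpa [dotProduct] using this

lemma energy_zero_adj {φ : V → ℝ} (h : energyFn G φ = 0) {u v : V} (huv : G.Adj u v) :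
    φ u = φ v := by
  classical
  have hsum : ∑ a, ∑ b, (if G.Adj a b then (φ a - φ b)^2 else 0) = 0 := by
    have := h
    simp only [energyFn] at this
    linarith
  have h1 : ∀ a ∈ Finset.univ, (0:ℝ) ≤ ∑ b, (if G.Adj a b then (φ a - φ b)^2 else 0) :=
    fun a _ => Finset.sum_nonneg fun b _ => by positivity
  have h2 := (Finset.sum_eq_zero_iff_of_nonneg h1).mp hsum u (Finset.mem_univ u)
  have h3 : ∀ b ∈ Finset.univ, (0:ℝ) ≤ (if G.Adj u b then (φ u - φ b)^2 else 0) :=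
    fun b _ => by positivity
  have h4 := (Finset.sum_eq_zero_iff_of_nonneg h3).mp h2 v (Finset.mem_univ v)
  rw [if_pos huv] at h4
  have : φ u - φ v = 0 := by
    nlinarith [sq_nonneg (φ u - φ v)]
  linarith

lemma energy_zero_const (hconn : G.Connected) {φ : V → ℝ} (h : energyFn G φ = 0)
    (u w : V) : φ u = φ w := by
  obtain ⟨p⟩ := hconn.preconnected u w
  induction p with
  | nil => rfl
  | cons hadj p ih => exact (energy_zero_adj h hadj).trans ih

lemma degR_pos (hconn : G.Connected) (h : 1 < Fintype.card V) (u : V) : 0 < degR G u := by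
  classical
  obtain ⟨w, hw⟩ := Fintype.exists_ne_of_one_lt_card h u
  obtain ⟨p⟩ := hconn.preconnected u w
  have : ∃ z, G.Adj u z := by
    cases p with
    | nil => exact (hw rfl).elim
    | cons hadj p => exact ⟨_, hadj⟩
  obtain ⟨z, hz⟩ := this
  have : z ∈ Finset.univ.filter fun y => G.Adj u y := by simp [hz]
  have hcard : 0 < (Finset.univ.filter fun y => G.Adj u y).card := Finset.card_pos.mpr ⟨z, this⟩
  unfold degR
  exact_mod_cast hcard
noncomputable def sumL (V : Type*) [Fintype V] : (V → ℝ) →ₗ[ℝ] ℝ where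
  toFun v := ∑ u, v u
  map_add' a b := by simp [Finset.sum_add_distrib]
  map_smul' r a := by simp [Finset.mul_sum]

lemma exists_lap_solution (hconn : G.Connected) (c : V → ℝ) (hc : ∑ u, c u = 0) :
    ∃ ψ : V → ℝ, Lap G *ᵥ ψ = c := by
  classical
  have hNE : Nonempty V := hconn.nonempty
  obtain ⟨u0⟩ := hNE
  set f : (V → ℝ) →ₗ[ℝ] (V → ℝ) := Matrix.mulVecLin (Lap G) with hf
  have hker : LinearMap.ker f = Submodule.span ℝ {fun _ => (1:ℝ)} := by
    apply le_antisymm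
    · intro v hv
      have hLv : Lap G *ᵥ v = 0 := hv
      have hE : energyFn G v = 0 := by
        have := energy_eq_quad (G := G) v
        rw [hLv] at this
        simpa [dotProduct] using this.symm
      have hconst : ∀ u, v u = v u0 := fun u => energy_zero_const hconn hE u u0
      rw [Submodule.mem_span_singleton]
      exact ⟨v u0, by funext u; simp [hconst u]⟩
    · rw [Submodule.span_le]
      intro x hx
      simp only [Set.mem_singleton_iff] at hx
      subst hx
      exact lap_mulVec_const 1
  have hone : (fun _ => (1:ℝ)) ≠ (0 : V → ℝ) := by
    intro h
    have := congrFun h u0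
    norm_num at this
  have hkerrank : Module.finrank ℝ (LinearMap.ker f) = 1 := by
    rw [hker]; exact finrank_span_singleton hone
  have hsurj : Function.Surjective (sumL V) := by
    intro r
    exact ⟨Pi.single u0 r, by simp [sumL, Finset.sum_pi_single]⟩
  have hsumker : Module.finrank ℝ (LinearMap.ker (sumL V)) = Fintype.card V - 1 := by
    have h1 := LinearMap.finrank_range_add_finrank_ker (sumL V)
    rw [LinearMap.range_eq_top.mpr hsurj, finrank_top, Module.finrank_self,
      Module.finrank_fintype_fun_eq_card] at h1
    omega
  have hrange : Module.finrank ℝ (LinearMap.range f) = Fintype.card V - 1 := by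
    have h1 := LinearMap.finrank_range_add_finrank_ker f
    rw [hkerrank, Module.finrank_fintype_fun_eq_card] at h1
    omega
  have hle : LinearMap.range f ≤ LinearMap.ker (sumL V) := by
    rintro x ⟨ψ, rfl⟩
    exact sum_lap_mulVec ψ
  have heq : LinearMap.range f = LinearMap.ker (sumL V) :=
    Submodule.eq_of_le_of_finrank_le hle (by rw [hsumker, hrange])
  have : c ∈ LinearMap.range f := by
    rw [heq]; exact hc
  obtain ⟨ψ, hψ⟩ := this
  exact ⟨ψ, hψ⟩
/-- The signed indicator `e_x - e_y`. -/
noncomputable def chi (x y : V) : V → ℝ := fun u => (if u = x then (1:ℝ) else 0) - (if u = y then 1 else 0)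

lemma sum_chi (x y : V) : ∑ u, chi x y u = 0 := by
  simp [chi, Finset.sum_sub_distrib, Finset.sum_ite_eq']

lemma dot_chi (x y : V) (φ : V → ℝ) : chi x y ⬝ᵥ φ = φ x - φ y := by
  simp only [dotProduct, chi, sub_mul, ite_mul, one_mul, zero_mul]
  rw [Finset.sum_sub_distrib]
  simp [Finset.sum_ite_eq']

lemma eres_self (x : V) : eres G x x = 0 := by
  have : {e : ℝ | ∃ φ : V → ℝ, φ x = 1 ∧ φ x = 0 ∧ e = energyFn G φ} = ∅ := by
    ext e
    simp only [Set.mem_setOf_eq, Set.mem_empty_iff_false, iff_false]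
    rintro ⟨φ, h1, h0, -⟩
    rw [h1] at h0; norm_num at h0
  rw [eres, this, Real.sInf_empty, _root_.inv_zero]

lemma eres_eq_of_sol (hconn : G.Connected) {x y : V} (hxy : x ≠ y) {ψ : V → ℝ}
    (hψ : Lap G *ᵥ ψ = chi x y) :
    0 < ψ x - ψ y ∧ eres G x y = ψ x - ψ y := by
  classical
  set r := ψ x - ψ y with hr
  have hEψ : energyFn G ψ = r := by
    rw [← energy_eq_quad, hψ, dotProduct_comm, dot_chi]
  have hr_nonneg : 0 ≤ r := hEψ ▸ energy_nonneg ψ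
  have hrpos : 0 < r := by
    rcases hr_nonneg.lt_or_eq with h | h
    · exact h
    · exfalso
      have hE0 : energyFn G ψ = 0 := by rw [hEψ, ← h]
      obtain ⟨u0⟩ := hconn.nonempty
      have hconst : ψ = fun _ => ψ u0 := funext fun u => energy_zero_const hconn hE0 u u0
      have : Lap G *ᵥ ψ = 0 := by rw [hconst]; exact lap_mulVec_const _
      rw [hψ] at this
      have := congrFun this x
      simp [chi, hxy] at this
  -- Cauchy-Schwarz lower bound
  have key : ∀ φ : V → ℝ, φ x = 1 → φ y = 0 → 1 / r ≤ energyFn G φ := by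
    intro φ hφx hφy
    have hB : ∀ t : ℝ, 0 ≤ energyFn G ψ * (t * t)
        + (2 * (ψ ⬝ᵥ (Lap G *ᵥ φ))) * t + energyFn G φ := by
      intro t
      have h0 : (0:ℝ) ≤ energyFn G (φ + t • ψ) := energy_nonneg _
      have hexp : energyFn G (φ + t • ψ) = energyFn G ψ * (t * t)
          + (2 * (ψ ⬝ᵥ (Lap G *ᵥ φ))) * t + energyFn G φ := by
        rw [← energy_eq_quad, ← energy_eq_quad, ← energy_eq_quad]
        have hmv : Lap G *ᵥ (φ + t • ψ) = (Lap G *ᵥ φ) + t • (Lap G *ᵥ ψ) := by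
          rw [Matrix.mulVec_add, Matrix.mulVec_smul]
        have hsymm : φ ⬝ᵥ (Lap G *ᵥ ψ) = ψ ⬝ᵥ (Lap G *ᵥ φ) := dot_lap_comm φ ψ
        rw [hmv]
        simp only [add_dotProduct, smul_dotProduct, dotProduct_add,
          dotProduct_smul, smul_eq_mul, hsymm]
        ring
      linarith [hexp ▸ h0]
    have hdisc := discrim_le_zero hB
    have hdot : ψ ⬝ᵥ (Lap G *ᵥ φ) = 1 := by
      rw [← dot_lap_comm, hψ, dotProduct_comm, dot_chi, hφx, hφy]; ring
    rw [hdot, discrim, hEψ] at hdisc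
    have h4 : (4:ℝ) ≤ 4 * (r * energyFn G φ) := by nlinarith
    have : 1 ≤ r * energyFn G φ := by linarith
    rw [div_le_iff₀ hrpos]
    nlinarith
  set S := {e : ℝ | ∃ φ : V → ℝ, φ x = 1 ∧ φ y = 0 ∧ e = energyFn G φ} with hS
  have hmem : (1 / r) ∈ S := by
    refine ⟨fun u => (ψ u - ψ y) / r,
      by show (ψ x - ψ y) / r = 1; rw [← hr]; field_simp, by simp, ?_⟩
    have h2 : ∑ u, ∑ v, (if G.Adj u v then ((ψ u - ψ y)/r - (ψ v - ψ y)/r)^2 else 0)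
        = (∑ u, ∑ v, if G.Adj u v then (ψ u - ψ v)^2 else 0) / r^2 := by
      rw [Finset.sum_div]
      refine Finset.sum_congr rfl fun u _ => ?_
      rw [Finset.sum_div]
      refine Finset.sum_congr rfl fun v _ => ?_
      by_cases h : G.Adj u v
      · simp only [if_pos h]
        rw [div_sub_div_same, sub_sub_sub_cancel_right, div_pow]
      · simp [h]
    have h3 : energyFn G (fun u => (ψ u - ψ y) / r) = energyFn G ψ / r ^ 2 := by
      simp only [energyFn]; rw [h2]; ring
    rw [h3, hEψ, sq]
    field_simp
  have hlb : ∀ e ∈ S, 1 / r ≤ e := by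
    rintro e ⟨φ, h1, h0, rfl⟩
    exact key φ h1 h0
  have hInf : sInf S = 1 / r :=
    le_antisymm (csInf_le ⟨1 / r, hlb⟩ hmem) (le_csInf ⟨1 / r, hmem⟩ hlb)
  refine ⟨hrpos, ?_⟩
  rw [eres, ← hS, hInf, one_div, inv_inv]

lemma eres_eq_sol (hconn : G.Connected) {x y : V} {ψ : V → ℝ}
    (hψ : Lap G *ᵥ ψ = chi x y) : eres G x y = ψ x - ψ y := by
  by_cases hxy : x = y
  · subst hxy; rw [eres_self]; ring
  · exact (eres_eq_of_sol hconn hxy hψ).2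

lemma eres_symm (hconn : G.Connected) (x y : V) : eres G x y = eres G y x := by
  by_cases hxy : x = y
  · subst hxy; rfl
  · obtain ⟨ψ, hψ⟩ := exists_lap_solution hconn (chi x y) (sum_chi x y)
    have hψ' : Lap G *ᵥ (-ψ) = chi y x := by
      rw [Matrix.mulVec_neg, hψ]
      funext u; simp [chi]
    rw [eres_eq_sol hconn hψ, eres_eq_sol hconn hψ']
    simp only [Pi.neg_apply]
    ring
/-- The walk matrix killed at `y` in both row and column. -/
noncomputable def Qm [Fintype V] (G : SimpleGraph V) (y : V) : Matrix V V ℝ :=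
  Matrix.of fun u v => if u = y then 0 else hitMat G y u v
section Walk

variable (y : V) (hconn : G.Connected) (hcard : 1 < Fintype.card V)

lemma Qm_nonneg (u v : V) : 0 ≤ Qm G y u v := by
  unfold Qm hitMat
  simp only [Matrix.of_apply]
  have := inv_nonneg.mpr (degR_nonneg (G := G) u)
  split_ifs <;> first | rfl | assumption

lemma Qm_pow_nonneg (k : ℕ) (u v : V) : 0 ≤ (Qm G y ^ k) u v := by
  induction k generalizing u v with
  | zero => simp [Matrix.one_apply]; split_ifs <;> norm_num
  | succ k ih =>
    rw [pow_succ', Matrix.mul_apply]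
    exact Finset.sum_nonneg fun w _ => mul_nonneg (Qm_nonneg y u w) (ih w v)

lemma Qm_row_y (v : V) : Qm G y y v = 0 := by simp [Qm]

lemma Qm_col_y (u : V) : Qm G y u y = 0 := by simp [Qm, hitMat]

lemma Qm_pow_col_y {x : V} (hx : x ≠ y) (k : ℕ) : (Qm G y ^ k) x y = 0 := by
  induction k with
  | zero => simp [Matrix.one_apply, hx]
  | succ k ih =>
    rw [pow_succ, Matrix.mul_apply]
    exact Finset.sum_eq_zero fun w _ => by rw [Qm_col_y, mul_zero]

lemma hitMat_pow_eq_Qm_pow (k : ℕ) : ∀ x, x ≠ y → ∀ z, (hitMat G y ^ k) x z = (Qm G y ^ k) x z := by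
  induction k with
  | zero => intro x hx z; rfl
  | succ k ih =>
    intro x hx z
    rw [pow_succ', pow_succ', Matrix.mul_apply, Matrix.mul_apply]
    refine Finset.sum_congr rfl fun w _ => ?_
    by_cases hw : w = y
    · have h1 : hitMat G y x w = 0 := by simp [hitMat, hw]
      have h2 : Qm G y x w = 0 := by rw [hw]; exact Qm_col_y y x
      rw [h1, h2, zero_mul, zero_mul]
    · rw [ih w hw z]
      congr 1
      simp [Qm, hx]

/-- Row sums of powers of `Qm`. -/
noncomputable def srow (k : ℕ) (u : V) : ℝ := ∑ z, (Qm G y ^ k) u z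

lemma srow_zero (u : V) : srow (G := G) y 0 u = 1 := by
  simp [srow, Matrix.one_apply]

lemma srow_succ (k : ℕ) (u : V) :
    srow (G := G) y (k+1) u = ∑ w, Qm G y u w * srow (G := G) y k w := by
  unfold srow
  calc ∑ z, (Qm G y ^ (k+1)) u z = ∑ z, ∑ w, Qm G y u w * (Qm G y ^ k) w z :=
        Finset.sum_congr rfl fun z _ => by rw [pow_succ', Matrix.mul_apply]
    _ = ∑ w, ∑ z, Qm G y u w * (Qm G y ^ k) w z := Finset.sum_comm
    _ = ∑ w, Qm G y u w * ∑ z, (Qm G y ^ k) w z :=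
        Finset.sum_congr rfl fun w _ => by rw [Finset.mul_sum]

lemma srow_nonneg (k : ℕ) (u : V) : 0 ≤ srow (G := G) y k u :=
  Finset.sum_nonneg fun z _ => Qm_pow_nonneg y k u z

include hconn hcard in
lemma srow_one_le (u : V) : srow (G := G) y 1 u ≤ 1 := by
  unfold srow
  simp only [pow_one]
  by_cases hu : u = y
  · subst hu
    simp only [Qm_row_y]
    simp
  · have hd : 0 < degR G u := degR_pos hconn hcard u
    have hle : ∀ z ∈ Finset.univ, Qm G y u z ≤ (if G.Adj u z then (degR G u)⁻¹ else 0) := by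
      intro z _
      simp only [Qm, hitMat, Matrix.of_apply, if_neg hu]
      split_ifs <;> simp [le_refl, inv_nonneg, hd.le]
    calc ∑ z, Qm G y u z ≤ ∑ z, (if G.Adj u z then (degR G u)⁻¹ else 0) :=
          Finset.sum_le_sum hle
      _ = degR G u * (degR G u)⁻¹ := sum_ite_adj u _
      _ = 1 := mul_inv_cancel₀ hd.ne'

include hconn hcard in
lemma srow_mono (k : ℕ) (u : V) : srow (G := G) y (k+1) u ≤ srow (G := G) y k u := by
  induction k generalizing u with
  | zero => rw [srow_zero]; exact srow_one_le y hconn hcard u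
  | succ k ih =>
    rw [srow_succ, srow_succ]
    exact Finset.sum_le_sum fun w _ =>
      mul_le_mul_of_nonneg_left (ih w) (Qm_nonneg y u w)

include hconn hcard in
lemma srow_le_one (k : ℕ) (u : V) : srow (G := G) y k u ≤ 1 := by
  induction k with
  | zero => rw [srow_zero]
  | succ k ih => exact le_trans (srow_mono y hconn hcard k u) ih

include hconn hcard in
lemma srow_anti {j k : ℕ} (h : j ≤ k) (u : V) :
    srow (G := G) y k u ≤ srow (G := G) y j u := by
  induction k with
  | zero => rw [Nat.le_zero.mp h]
  | succ k ih =>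
    rcases Nat.lt_or_ge j (k+1) with h2 | h2
    · exact le_trans (srow_mono y hconn hcard k u) (ih (Nat.lt_succ_iff.mp h2))
    · rw [Nat.le_antisymm h h2]

end Walk
section Walk2

variable (y : V) (hconn : G.Connected) (hcard : 1 < Fintype.card V)

include hconn hcard in
lemma srow_one_lt {u : V} (hu : u ≠ y) (hadj : G.Adj u y) : srow (G := G) y 1 u < 1 := by
  have hd : 0 < degR G u := degR_pos hconn hcard u
  have hcalc : ∀ z, Qm G y u z = (if G.Adj u z then (degR G u)⁻¹ else 0)
      - (if z = y then (if G.Adj u z then (degR G u)⁻¹ else 0) else 0) := by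
    intro z
    simp only [Qm, hitMat, Matrix.of_apply, if_neg hu]
    split_ifs <;> ring
  have : srow (G := G) y 1 u
      = 1 - (degR G u)⁻¹ := by
    unfold srow
    simp only [pow_one]
    rw [Finset.sum_congr rfl fun z _ => hcalc z, Finset.sum_sub_distrib, sum_ite_adj,
      mul_inv_cancel₀ hd.ne', Finset.sum_ite_eq', if_pos (Finset.mem_univ y), if_pos hadj]
  rw [this]
  have : 0 < (degR G u)⁻¹ := inv_pos.mpr hd
  linarith

include hconn hcard in
lemma srow_dist_lt_one : ∀ d : ℕ, 1 ≤ d → ∀ u, u ≠ y → G.dist u y = d →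
    srow (G := G) y d u < 1 := by
  intro d
  induction d using Nat.strong_induction_on with
  | _ d ih =>
    intro hd u hu hdist
    have hreach : G.Reachable u y := hconn.preconnected u y
    obtain ⟨p, hp⟩ := hreach.exists_walk_length_eq_dist
    rw [hdist] at hp
    cases p with
    | nil => exact absurd rfl hu
    | cons hadj q =>
      rename_i w
      rw [SimpleGraph.Walk.length_cons] at hp
      rcases Nat.eq_or_lt_of_le hd with h1 | h1
      · -- d = 1
        have hq : q.length = 0 := by omega
        have hwy : w = y := by
          cases q with
          | nil => rfl
          | cons h r => simp [SimpleGraph.Walk.length_cons] at hq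
        rw [← h1]
        exact srow_one_lt y hconn hcard hu (hwy ▸ hadj)
      · -- d ≥ 2
        have hwy : w ≠ y := by
          intro hwy
          have : G.dist u y = 1 := SimpleGraph.dist_eq_one_iff_adj.mpr (hwy ▸ hadj)
          omega
        have hle : G.dist w y ≤ d - 1 := by
          have := SimpleGraph.dist_le q
          omega
        have hge : d ≤ 1 + G.dist w y := by
          have htri := hconn.dist_triangle (u := u) (v := w) (w := y)
          have h1 : G.dist u w ≤ 1 := by
            have : G.dist u w ≤ (SimpleGraph.Walk.cons hadj SimpleGraph.Walk.nil).length :=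
              SimpleGraph.dist_le _
            simpa using this
          omega
        have hdw : G.dist w y = d - 1 := by omega
        have hd1 : 1 ≤ d - 1 := by
          have := (hconn.pos_dist_of_ne hwy)
          omega
        have hlt := ih (d-1) (by omega) (by omega) w hwy hdw
        have hstep : srow (G := G) y d u = ∑ v, Qm G y u v * srow (G := G) y (d-1) v := by
          have : d = (d-1) + 1 := by omega
          rw [this, srow_succ]
          simp
        rw [hstep]
        have hQuw : 0 < Qm G y u w := by
          simp only [Qm, hitMat, Matrix.of_apply, if_neg hu, if_neg hwy, if_pos hadj]
          exact inv_pos.mpr (degR_pos hconn hcard u)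
        have hlt2 : ∑ v, Qm G y u v * srow (G := G) y (d-1) v < ∑ v, Qm G y u v * 1 := by
          apply Finset.sum_lt_sum
          · intro v _
            exact mul_le_mul_of_nonneg_left (srow_le_one y hconn hcard _ v) (Qm_nonneg y u v)
          · exact ⟨w, Finset.mem_univ w, by
              have := mul_lt_mul_of_pos_left hlt hQuw
              simpa using this⟩
        have hfin : ∑ v, Qm G y u v * 1 ≤ 1 := by
          have := srow_one_le y hconn hcard u
          unfold srow at this
          simpa [pow_one] using this
        linarith

/-- Uniform contraction horizon. -/
noncomputable def Dhor (y : V) : ℕ := max 1 (Finset.univ.sup fun u => G.dist u y)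

lemma Dhor_pos : 1 ≤ Dhor (G := G) y := le_max_left _ _

include hconn hcard in
lemma srow_Dhor_lt_one (u : V) : srow (G := G) y (Dhor (G := G) y) u < 1 := by
  by_cases hu : u = y
  · rw [hu]
    have h1 : srow (G := G) y 1 y = 0 := by
      unfold srow
      simp only [pow_one]
      exact Finset.sum_eq_zero fun z _ => Qm_row_y y z
    have h2 := srow_anti (G := G) y hconn hcard (Dhor_pos (G := G) y) y
    rw [h1] at h2
    linarith
  · have hd1 : 1 ≤ G.dist u y := hconn.pos_dist_of_ne hu
    have hdD : G.dist u y ≤ Dhor (G := G) y :=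
      le_trans (Finset.le_sup (f := fun v => G.dist v y) (Finset.mem_univ u)) (le_max_right _ _)
    exact lt_of_le_of_lt (srow_anti y hconn hcard hdD u)
      (srow_dist_lt_one y hconn hcard _ hd1 u hu rfl)

end Walk2
section Walk3

variable (y : V) (hconn : G.Connected) (hcard : 1 < Fintype.card V)

lemma srow_add (j k : ℕ) (u : V) :
    srow (G := G) y (j + k) u = ∑ w, (Qm G y ^ j) u w * srow (G := G) y k w := by
  unfold srow
  calc ∑ z, (Qm G y ^ (j + k)) u z = ∑ z, ∑ w, (Qm G y ^ j) u w * (Qm G y ^ k) w z :=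
        Finset.sum_congr rfl fun z _ => by rw [pow_add, Matrix.mul_apply]
    _ = ∑ w, ∑ z, (Qm G y ^ j) u w * (Qm G y ^ k) w z := Finset.sum_comm
    _ = ∑ w, (Qm G y ^ j) u w * ∑ z, (Qm G y ^ k) w z :=
        Finset.sum_congr rfl fun w _ => by rw [Finset.mul_sum]

lemma hitting_eq_of_harm {y : V} {h : V → ℝ} (hconn : G.Connected) (hy : h y = 0)
    (hharm : ∀ u, u ≠ y → (Lap G *ᵥ h) u = degR G u) (x : V) :
    hitting G x y = h x := by
  classical
  by_cases hxy : x = y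
  · rw [hxy, hitting, if_pos rfl, hy]
  · have hcard : 1 < Fintype.card V := Fintype.one_lt_card_iff_nontrivial.mpr ⟨⟨x, y, hxy⟩⟩
    have hNE : Nonempty V := ⟨x⟩
    set D := Dhor (G := G) y with hD
    have hD1 : 1 ≤ D := Dhor_pos y
    set t := Finset.univ.sup' Finset.univ_nonempty (fun u => srow (G := G) y D u) with ht
    have ht_lt : t < 1 := (Finset.sup'_lt_iff _).mpr fun u _ => srow_Dhor_lt_one y hconn hcard u
    have ht_le : ∀ u, srow (G := G) y D u ≤ t := fun u => Finset.le_sup' _ (Finset.mem_univ u)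
    have ht0 : (0:ℝ) ≤ t := le_trans (srow_nonneg y D x) (ht_le x)
    -- geometric decay
    have hgeo : ∀ k u, srow (G := G) y (D * k) u ≤ t ^ k := by
      intro k
      induction k with
      | zero => intro u; rw [Nat.mul_zero, srow_zero, pow_zero]
      | succ k ih =>
        intro u
        have hDk : D * (k+1) = D + D * k := by ring
        rw [hDk, srow_add]
        calc ∑ w, (Qm G y ^ D) u w * srow (G := G) y (D * k) w
            ≤ ∑ w, (Qm G y ^ D) u w * t ^ k := Finset.sum_le_sum fun w _ =>
              mul_le_mul_of_nonneg_left (ih w) (Qm_pow_nonneg y D u w)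
          _ = srow (G := G) y D u * t ^ k := by rw [srow, ← Finset.sum_mul]
          _ ≤ t * t ^ k := mul_le_mul_of_nonneg_right (ht_le u) (pow_nonneg ht0 k)
          _ = t ^ (k+1) := (pow_succ' t k).symm
    have hbound : ∀ k u, srow (G := G) y k u ≤ t ^ (k / D) := by
      intro k u
      have h1 : D * (k / D) ≤ k := by
        rw [Nat.mul_comm]
        exact Nat.div_mul_le_self k D
      exact le_trans (srow_anti y hconn hcard h1 u) (hgeo (k / D) u)
    -- harmonicity in walk form
    set c' : V → ℝ := fun z => if z = y then 0 else 1 with hc'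
    have hvec : h - Qm G y *ᵥ h = c' := by
      funext u
      simp only [Pi.sub_apply, hc']
      by_cases hu : u = y
      · rw [if_pos hu, hu, hy]
        have : (Qm G y *ᵥ h) y = 0 := by
          simp only [Matrix.mulVec, dotProduct]
          exact Finset.sum_eq_zero fun w _ => by rw [Qm_row_y, zero_mul]
        rw [this]; ring
      · rw [if_neg hu]
        have hd : 0 < degR G u := degR_pos hconn hcard u
        have hQ : (Qm G y *ᵥ h) u = (degR G u)⁻¹ * ∑ w, (if G.Adj u w then h w else 0) := by
          simp only [Matrix.mulVec, dotProduct, Finset.mul_sum]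
          refine Finset.sum_congr rfl fun w _ => ?_
          simp only [Qm, hitMat, Matrix.of_apply, if_neg hu]
          by_cases hw : w = y
          · rw [if_pos hw, hw, hy]
            split_ifs <;> ring
          · rw [if_neg hw]
            split_ifs <;> ring
        have hL := hharm u hu
        rw [lap_mulVec] at hL
        rw [hQ]
        have : ∑ w, (if G.Adj u w then h w else 0) = degR G u * h u - degR G u := by
          linarith
        rw [this]
        field_simp
        ring
    -- telescoping
    have htel : ∀ K : ℕ, ∑ k ∈ Finset.range K, ((Qm G y ^ k) *ᵥ c') x
        = h x - ((Qm G y ^ K) *ᵥ h) x := by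
      intro K
      induction K with
      | zero => simp [Matrix.one_mulVec]
      | succ K ihK =>
        rw [Finset.sum_range_succ, ihK]
        have h1 : (Qm G y ^ (K+1)) *ᵥ h = (Qm G y ^ K) *ᵥ (Qm G y *ᵥ h) := by
          rw [pow_succ, ← Matrix.mulVec_mulVec]
        have h2 : (Qm G y ^ K) *ᵥ c' = (Qm G y ^ K) *ᵥ h - (Qm G y ^ K) *ᵥ (Qm G y *ᵥ h) := by
          rw [← Matrix.mulVec_sub, hvec]
        rw [h1, h2]
        simp only [Pi.sub_apply]
        ring
    -- identification of terms
    have hterm : ∀ k, ((Qm G y ^ k) *ᵥ c') x = srow (G := G) y k x := by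
      intro k
      simp only [Matrix.mulVec, dotProduct, srow]
      refine Finset.sum_congr rfl fun z _ => ?_
      by_cases hz : z = y
      · rw [hz, Qm_pow_col_y y hxy k]
        ring
      · simp [hc', hz]
    have hterm2 : ∀ k, ∑ z, (hitMat G y ^ k) x z = srow (G := G) y k x := by
      intro k
      unfold srow
      exact Finset.sum_congr rfl fun z _ => hitMat_pow_eq_Qm_pow y k x hxy z
    -- error bound
    set M := Finset.univ.sup' Finset.univ_nonempty (fun u => |h u|) with hM
    have hMle : ∀ u, |h u| ≤ M := fun u => Finset.le_sup' (f := fun u => |h u|) (Finset.mem_univ u)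
    have hM0 : 0 ≤ M := le_trans (abs_nonneg _) (hMle x)
    have herr : ∀ K, |((Qm G y ^ K) *ᵥ h) x| ≤ M * t ^ (K / D) := by
      intro K
      have h1 : |((Qm G y ^ K) *ᵥ h) x| ≤ ∑ z, (Qm G y ^ K) x z * |h z| := by
        refine le_trans (Finset.abs_sum_le_sum_abs _ _) (Finset.sum_le_sum fun z _ => ?_)
        rw [abs_mul, abs_of_nonneg (Qm_pow_nonneg y K x z)]
      have h2 : ∑ z, (Qm G y ^ K) x z * |h z| ≤ ∑ z, (Qm G y ^ K) x z * M :=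
        Finset.sum_le_sum fun z _ =>
          mul_le_mul_of_nonneg_left (hMle z) (Qm_pow_nonneg y K x z)
      have h3 : ∑ z, (Qm G y ^ K) x z * M = srow (G := G) y K x * M := by
        rw [srow, ← Finset.sum_mul]
      have h4 : srow (G := G) y K x * M ≤ t ^ (K / D) * M :=
        mul_le_mul_of_nonneg_right (hbound K x) hM0
      calc |((Qm G y ^ K) *ᵥ h) x| ≤ ∑ z, (Qm G y ^ K) x z * |h z| := h1
        _ ≤ ∑ z, (Qm G y ^ K) x z * M := h2
        _ = srow (G := G) y K x * M := h3
        _ ≤ t ^ (K / D) * M := h4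
        _ = M * t ^ (K / D) := mul_comm _ _
    -- limits
    have hdiv : Filter.Tendsto (fun K : ℕ => K / D) Filter.atTop Filter.atTop := by
      apply Filter.tendsto_atTop_atTop.mpr
      intro b
      exact ⟨b * D, fun a ha => (Nat.le_div_iff_mul_le (by omega)).mpr ha⟩
    have hpow : Filter.Tendsto (fun K : ℕ => t ^ (K / D)) Filter.atTop (nhds 0) :=
      (tendsto_pow_atTop_nhds_zero_of_lt_one ht0 ht_lt).comp hdiv
    have hpowM : Filter.Tendsto (fun K : ℕ => M * t ^ (K / D)) Filter.atTop (nhds 0) := by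
      have := hpow.const_mul M
      simpa using this
    have herr0 : Filter.Tendsto (fun K => ((Qm G y ^ K) *ᵥ h) x) Filter.atTop (nhds 0) :=
      squeeze_zero_norm (fun K => by simpa using herr K) hpowM
    have hPS : Filter.Tendsto (fun K => ∑ k ∈ Finset.range K, srow (G := G) y k x)
        Filter.atTop (nhds (h x)) := by
      have heq : (fun K => ∑ k ∈ Finset.range K, srow (G := G) y k x)
          = fun K => h x - ((Qm G y ^ K) *ᵥ h) x := by
        funext K
        rw [← htel K]
        exact Finset.sum_congr rfl fun k _ => (hterm k).symm
      rw [heq]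
      have := Filter.Tendsto.const_sub (h x) herr0
      simpa using this
    -- summability
    have hsum : Summable (fun k => srow (G := G) y k x) := by
      apply summable_of_sum_range_le (c := h x + M) (fun k => srow_nonneg y k x)
      intro K
      have h1 : ∑ k ∈ Finset.range K, srow (G := G) y k x = h x - ((Qm G y ^ K) *ᵥ h) x := by
        rw [← htel K]
        exact Finset.sum_congr rfl fun k _ => (hterm k).symm
      have h2 := herr K
      have h3 : t ^ (K / D) ≤ 1 := pow_le_one₀ ht0 ht_lt.le
      have h5 := abs_le.mp h2
      have h4 : M * t ^ (K / D) ≤ M := by nlinarith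
      rw [h1]
      linarith [h5.1]
    have hhastsum := hsum.hasSum.tendsto_sum_nat
    have hval : ∑' k, srow (G := G) y k x = h x := tendsto_nhds_unique hhastsum hPS
    rw [hitting, if_neg hxy]
    rw [tsum_congr hterm2, hval]

end Walk3
lemma sum_degR : ∑ u, degR G u = 2 * (esize G : ℝ) := by
  classical
  have hdeg : ∀ u, degR G u = (G.degree u : ℝ) := by
    intro u
    rw [degR, SimpleGraph.degree, SimpleGraph.neighborFinset_eq_filter]
  have hes : esize G = G.edgeFinset.card := by
    rw [esize, Nat.card_coe_set_eq, Set.ncard_eq_toFinset_card']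
    congr 1
  have h2 := SimpleGraph.sum_degrees_eq_twice_card_edges G
  calc ∑ u, degR G u = ∑ u, (G.degree u : ℝ) := Finset.sum_congr rfl fun u _ => hdeg u
    _ = ((∑ u, G.degree u : ℕ) : ℝ) := by push_cast; ring
    _ = ((2 * G.edgeFinset.card : ℕ) : ℝ) := by rw [h2]
    _ = 2 * (esize G : ℝ) := by rw [hes]; push_cast; ring

theorem hitting_formula' (hconn : G.Connected)
    (m : ℕ) (hm : esize G = m) (x y : V) :
    hitting G x y = (1/2) * ∑ z, degR G z * (eres G x y + eres G z y - eres G z x) ∧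
    hitting G x y = (m : ℝ) * eres G x y + (1/2) * (Rw G y - Rw G x) := by
  classical
  have hex : ∀ a : V, ∃ w : V → ℝ, Lap G *ᵥ w = chi a y ∧ w y = 0 := by
    intro a
    obtain ⟨ψ, hψ⟩ := exists_lap_solution hconn (chi a y) (sum_chi a y)
    refine ⟨fun u => ψ u - ψ y, ?_, by simp⟩
    have heq : (fun u => ψ u - ψ y) = ψ - (fun _ => ψ y) := rfl
    rw [heq, Matrix.mulVec_sub, hψ, lap_mulVec_const]
    simp
  choose v hv1 hv2 using hex
  have hrecip : ∀ a b, v a b = v b a := by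
    intro a b
    have h1 : v a b = chi b y ⬝ᵥ v a := by rw [dot_chi, hv2]; ring
    rw [h1, ← hv1 b, dotProduct_comm, dot_lap_comm, hv1 a, dotProduct_comm,
      dot_chi, hv2]
    ring
  have heres_ay : ∀ a, eres G a y = v a a := by
    intro a
    rw [eres_eq_sol hconn (hv1 a), hv2]
    ring
  have heres_az : ∀ a z, eres G a z = v a a - v z a - v a z + v z z := by
    intro a z
    have hsol : Lap G *ᵥ (v a - v z) = chi a z := by
      rw [Matrix.mulVec_sub, hv1, hv1]
      funext u
      simp only [Pi.sub_apply, chi]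
      ring
    rw [eres_eq_sol hconn hsol]
    simp only [Pi.sub_apply]
    ring
  have hhalf : ∀ z, eres G x y + eres G z y - eres G z x = 2 * v z x := by
    intro z
    rw [heres_ay x, heres_ay z, heres_az z x, hrecip x z]
    ring
  set hstar : V → ℝ := fun u => ∑ a, degR G a * v a u with hhstar
  have hsy : hstar y = 0 := by
    simp only [hhstar]
    exact Finset.sum_eq_zero fun a _ => by rw [hv2 a, mul_zero]
  have hLh : ∀ u, u ≠ y → (Lap G *ᵥ hstar) u = degR G u := by
    intro u hu
    have h1 : (Lap G *ᵥ hstar) u = ∑ a, degR G a * ((Lap G *ᵥ v a) u) := by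
      simp only [Matrix.mulVec, dotProduct, hhstar]
      calc ∑ w, Lap G u w * ∑ a, degR G a * v a w
          = ∑ w, ∑ a, Lap G u w * (degR G a * v a w) :=
            Finset.sum_congr rfl fun w _ => Finset.mul_sum _ _ _
        _ = ∑ a, ∑ w, Lap G u w * (degR G a * v a w) := Finset.sum_comm
        _ = ∑ a, degR G a * ∑ w, Lap G u w * v a w := by
            refine Finset.sum_congr rfl fun a _ => ?_
            rw [Finset.mul_sum]
            exact Finset.sum_congr rfl fun w _ => by ring
    rw [h1]
    have h2 : ∀ a, degR G a * ((Lap G *ᵥ v a) u) = if u = a then degR G a else 0 := by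
      intro a
      rw [hv1 a]
      simp only [chi, if_neg hu, sub_zero]
      split_ifs <;> ring
    rw [Finset.sum_congr rfl fun a _ => h2 a, Finset.sum_ite_eq]
    simp
  have hmain : hitting G x y = hstar x := hitting_eq_of_harm hconn hsy hLh x
  have hg1 : (1/2) * ∑ z, degR G z * (eres G x y + eres G z y - eres G z x) = hstar x := by
    have hterm : ∀ z, degR G z * (eres G x y + eres G z y - eres G z x)
        = 2 * (degR G z * v z x) := by
      intro z
      rw [hhalf z]
      ring
    rw [Finset.sum_congr rfl fun z _ => hterm z, ← Finset.mul_sum]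
    simp only [hhstar]
    ring
  refine ⟨by rw [hmain, hg1], ?_⟩
  rw [hmain, ← hg1]
  have hexp : ∑ z, degR G z * (eres G x y + eres G z y - eres G z x)
      = (∑ z, degR G z) * eres G x y + (∑ z, degR G z * eres G z y)
        - ∑ z, degR G z * eres G z x := by
    rw [Finset.sum_mul, ← Finset.sum_add_distrib, ← Finset.sum_sub_distrib]
    refine Finset.sum_congr rfl fun z _ => by ring
  have hRwy : Rw G y = ∑ z, degR G z * eres G z y :=
    Finset.sum_congr rfl fun z _ => by rw [eres_symm hconn y z]
  have hRwx : Rw G x = ∑ z, degR G z * eres G z x :=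
    Finset.sum_congr rfl fun z _ => by rw [eres_symm hconn x z]
  have hsd : ∑ z, degR G z = 2 * (m : ℝ) := by rw [sum_degR, hm]
  rw [hexp, hsd, ← hRwy, ← hRwx]
  ring

end AuxHitting

/-- For a connected graph `G` with `m` edges and `x, y ∈ V(G)`,
`H_{xy} = ½ Σ_z deg(z)(r(x,y)+r(z,y)−r(z,x)) = m·r(x,y) + ½(R^w(y)−R^w(x))`. -/
theorem hitting_formula [Fintype V] (G : SimpleGraph V) (hconn : G.Connected)
    (m : ℕ) (hm : esize G = m) (x y : V) :
    hitting G x y = (1/2) * ∑ z, degR G z * (eres G x y + eres G z y - eres G z x) ∧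
    hitting G x y = (m : ℝ) * eres G x y + (1/2) * (Rw G y - Rw G x) := by
  exact hitting_formula' hconn m hm x y
end

section
/- Let G be an n-vertex unicyclic graph with unique cycle C_l = v_1…v_l and tree branches T_1,…,T_l, and let x ∈ V(T_i), y ∈ V(T_j). Then the expected hitting time satisfies H_{xy} = n·r(x,y) + R(y) − R(x) + d(y, v_j) − d(x, v_i). -/
open SimpleGraph Finset

attribute [local instance] Classical.propDecidable

variable {V : Type*}

set_option linter.unusedSectionVars false

namespace UniAux
open Matrix

variable [Fintype V] {G : SimpleGraph V}

noncomputable def lap (G : SimpleGraph V) [Fintype V] : Matrix V V ℝ :=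
  Matrix.of fun u v => if u = v then degR G u else if G.Adj u v then -1 else 0

lemma sum_ite_adj (G : SimpleGraph V) (u : V) (c : ℝ) :
    ∑ v, (if G.Adj u v then c else 0) = degR G u * c := by
  rw [← Finset.sum_filter, Finset.sum_const, degR, nsmul_eq_mul]

lemma lap_mulVec (φ : V → ℝ) (u : V) :
    (lap G *ᵥ φ) u = degR G u * φ u - ∑ v, (if G.Adj u v then φ v else 0) := by
  simp only [Matrix.mulVec, dotProduct, lap, Matrix.of_apply]
  have key : ∀ v, (if u = v then degR G u else if G.Adj u v then (-1:ℝ) else 0) * φ v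
      = (if u = v then degR G u * φ v else 0) - (if G.Adj u v then φ v else 0) := by
    intro v
    by_cases h : u = v
    · subst h; simp [G.irrefl]
    · by_cases h2 : G.Adj u v <;> simp [h, h2]
  rw [Finset.sum_congr rfl fun v _ => key v, Finset.sum_sub_distrib,
    Finset.sum_ite_eq Finset.univ u (fun v => degR G u * φ v)]
  simp

lemma lap_mulVec_const (a : ℝ) (u : V) : (lap G *ᵥ (fun _ => a)) u = 0 := by
  rw [lap_mulVec, sum_ite_adj]; ring

lemma double_adj_swap (G : SimpleGraph V) (F : V → V → ℝ) :
    ∑ u, ∑ v, (if G.Adj u v then F u v else 0)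
      = ∑ u, ∑ v, (if G.Adj u v then F v u else 0) := by
  rw [Finset.sum_comm]
  refine Finset.sum_congr rfl fun u _ => Finset.sum_congr rfl fun v _ => ?_
  rw [G.adj_comm]

lemma dot_lap (φ ψ : V → ℝ) :
    φ ⬝ᵥ (lap G *ᵥ ψ) = (∑ u, degR G u * (φ u * ψ u))
      - ∑ u, ∑ v, (if G.Adj u v then φ u * ψ v else 0) := by
  simp only [dotProduct, lap_mulVec]
  rw [← Finset.sum_sub_distrib]
  refine Finset.sum_congr rfl fun u _ => ?_
  rw [mul_sub, Finset.mul_sum]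
  congr 1
  · ring
  · refine Finset.sum_congr rfl fun v _ => ?_
    by_cases h : G.Adj u v <;> simp [h]

lemma dot_lap_symm (φ ψ : V → ℝ) : φ ⬝ᵥ (lap G *ᵥ ψ) = ψ ⬝ᵥ (lap G *ᵥ φ) := by
  rw [dot_lap, dot_lap]
  congr 1
  · refine Finset.sum_congr rfl fun u _ => ?_; ring
  · rw [double_adj_swap]
    refine Finset.sum_congr rfl fun u _ => Finset.sum_congr rfl fun v _ => ?_
    by_cases h : G.Adj u v <;> simp [h]; ring

lemma energy_eq_dot (φ : V → ℝ) : energyFn G φ = φ ⬝ᵥ (lap G *ᵥ φ) := by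
  rw [dot_lap, energyFn]
  have expand : ∀ u v, (if G.Adj u v then (φ u - φ v)^2 else 0)
      = (if G.Adj u v then φ u * φ u else 0) + (if G.Adj u v then φ v * φ v else 0)
        - 2 * (if G.Adj u v then φ u * φ v else 0) := by
    intro u v; by_cases h : G.Adj u v <;> simp [h]; ring
  simp only [expand, Finset.sum_sub_distrib, Finset.sum_add_distrib, ← Finset.mul_sum]
  have h1 : ∑ u, ∑ v, (if G.Adj u v then φ u * φ u else 0) = ∑ u, degR G u * (φ u * φ u) := by
    refine Finset.sum_congr rfl fun u _ => ?_
    rw [sum_ite_adj]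
  have h2 : ∑ u, ∑ v, (if G.Adj u v then φ v * φ v else 0)
      = ∑ u, degR G u * (φ u * φ u) := by
    rw [double_adj_swap]; exact h1
  rw [h1, h2]; ring

lemma energy_nonneg (φ : V → ℝ) : 0 ≤ energyFn G φ := by
  rw [energyFn]
  have : (0:ℝ) ≤ ∑ u, ∑ v, (if G.Adj u v then (φ u - φ v)^2 else 0) := by
    refine Finset.sum_nonneg fun u _ => Finset.sum_nonneg fun v _ => ?_
    by_cases h : G.Adj u v <;> simp [h]; positivity
  linarith

lemma adj_eq_of_energy_zero {φ : V → ℝ} (h : energyFn G φ = 0) {u v : V}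
    (huv : G.Adj u v) : φ u = φ v := by
  rw [energyFn] at h
  have h0 : ∑ u, ∑ v, (if G.Adj u v then (φ u - φ v)^2 else 0) = 0 := by linarith
  have hnn : ∀ a ∈ Finset.univ, (0:ℝ) ≤ ∑ v, (if G.Adj a v then (φ a - φ v)^2 else 0) := by
    intro a _
    refine Finset.sum_nonneg fun w _ => ?_
    by_cases hh : G.Adj a w <;> simp [hh]; positivity
  have hu := (Finset.sum_eq_zero_iff_of_nonneg hnn).mp h0 u (Finset.mem_univ u)
  have hnn2 : ∀ w ∈ Finset.univ, (0:ℝ) ≤ (if G.Adj u w then (φ u - φ w)^2 else 0) := by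
    intro w _; by_cases hh : G.Adj u w <;> simp [hh]; positivity
  have hv := (Finset.sum_eq_zero_iff_of_nonneg hnn2).mp hu v (Finset.mem_univ v)
  rw [if_pos huv] at hv
  have := sq_eq_zero_iff.mp hv
  linarith

lemma eq_of_walk {φ : V → ℝ} (h : ∀ a b, G.Adj a b → φ a = φ b) {u v : V}
    (p : G.Walk u v) : φ u = φ v := by
  induction p with
  | nil => rfl
  | cons h' _ ih => exact (h _ _ h').trans ih

lemma const_of_lap_zero (hconn : G.Connected) {φ : V → ℝ}
    (h : lap G *ᵥ φ = 0) (u v : V) : φ u = φ v := by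
  have he : energyFn G φ = 0 := by
    rw [energy_eq_dot, h]; simp [dotProduct]
  obtain ⟨p⟩ := hconn.preconnected u v
  exact eq_of_walk (fun a b hab => adj_eq_of_energy_zero he hab) p

noncomputable def lmod (G : SimpleGraph V) [Fintype V] : Matrix V V ℝ :=
  Matrix.of fun u v => lap G u v + (Fintype.card V : ℝ)⁻¹

lemma lmod_mulVec (φ : V → ℝ) (u : V) :
    (lmod G *ᵥ φ) u = (lap G *ᵥ φ) u + (Fintype.card V : ℝ)⁻¹ * ∑ v, φ v := by
  simp only [lmod, Matrix.mulVec, dotProduct, Matrix.of_apply, add_mul,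
    Finset.sum_add_distrib, Finset.mul_sum]

lemma dot_lmod (φ ψ : V → ℝ) :
    φ ⬝ᵥ (lmod G *ᵥ ψ) = φ ⬝ᵥ (lap G *ᵥ ψ)
      + (Fintype.card V : ℝ)⁻¹ * ((∑ u, φ u) * (∑ v, ψ v)) := by
  simp only [dotProduct, lmod_mulVec, mul_add, Finset.sum_add_distrib]
  congr 1
  have h : ∑ u, φ u * ((Fintype.card V:ℝ)⁻¹ * ∑ v, ψ v)
      = (∑ u, φ u) * ((Fintype.card V:ℝ)⁻¹ * ∑ v, ψ v) := (Finset.sum_mul _ _ _).symm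
  rw [h]; ring

lemma dot_lmod_symm (φ ψ : V → ℝ) : φ ⬝ᵥ (lmod G *ᵥ ψ) = ψ ⬝ᵥ (lmod G *ᵥ φ) := by
  rw [dot_lmod, dot_lmod, dot_lap_symm]; ring

lemma dot_lmod_self (φ : V → ℝ) :
    φ ⬝ᵥ (lmod G *ᵥ φ) = energyFn G φ + (Fintype.card V : ℝ)⁻¹ * (∑ u, φ u)^2 := by
  rw [dot_lmod, ← energy_eq_dot]; ring

lemma lmod_mulVec_eq_zero (hconn : G.Connected) {φ : V → ℝ}
    (h : lmod G *ᵥ φ = 0) : φ = 0 := by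
  have hcard : (0:ℝ) < (Fintype.card V : ℝ) := by
    have := hconn.nonempty
    exact_mod_cast Fintype.card_pos
  have hq0 : φ ⬝ᵥ (lmod G *ᵥ φ) = 0 := by rw [h]; exact dotProduct_zero φ
  rw [dot_lmod_self] at hq0
  have hq : energyFn G φ + (Fintype.card V : ℝ)⁻¹ * (∑ u, φ u)^2 = 0 := hq0
  have h1 : (0:ℝ) ≤ energyFn G φ := energy_nonneg φ
  have h2 : (0:ℝ) ≤ (Fintype.card V : ℝ)⁻¹ * (∑ u, φ u)^2 := by positivity
  have he : energyFn G φ = 0 := by linarith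
  have hs : (∑ u, φ u) = 0 := by
    have : (Fintype.card V : ℝ)⁻¹ * (∑ u, φ u)^2 = 0 := by linarith
    have h3 : ((Fintype.card V : ℝ)⁻¹) ≠ 0 := by positivity
    have := mul_eq_zero.mp this
    rcases this with h | h
    · exact absurd h h3
    · exact sq_eq_zero_iff.mp h
  -- φ is constant
  have hc : ∀ u v, φ u = φ v := by
    intro u v
    obtain ⟨p⟩ := hconn.preconnected u v
    exact eq_of_walk (fun a b hab => adj_eq_of_energy_zero he hab) p
  obtain ⟨u0⟩ := hconn.nonempty
  have : (∑ _u : V, φ u0) = 0 := by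
    rw [← hs]; exact Finset.sum_congr rfl fun u _ => hc u0 u
  rw [Finset.sum_const, nsmul_eq_mul] at this
  have : φ u0 = 0 := by
    rcases mul_eq_zero.mp this with h | h
    · exact absurd h (by positivity)
    · exact h
  funext u; rw [hc u u0, this]; rfl

lemma lmod_bijective (hconn : G.Connected) :
    Function.Bijective (Matrix.mulVecLin (lmod G)) := by
  have hinj : Function.Injective (Matrix.mulVecLin (lmod G)) := by
    rw [injective_iff_map_eq_zero]
    intro φ hφ
    exact lmod_mulVec_eq_zero hconn (by simpa [Matrix.mulVecLin_apply] using hφ)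
  exact ⟨hinj, LinearMap.injective_iff_surjective.mp hinj⟩

noncomputable def Nf (G : SimpleGraph V) [Fintype V] (hconn : G.Connected) :
    (V → ℝ) ≃ₗ[ℝ] (V → ℝ) :=
  LinearEquiv.ofBijective (Matrix.mulVecLin (lmod G)) (lmod_bijective hconn)

variable (hconn : G.Connected)

lemma lmod_Nf (w : V → ℝ) : lmod G *ᵥ ((Nf G hconn).symm w) = w := by
  have h := (Nf G hconn).apply_symm_apply w
  simpa only [Nf, LinearEquiv.ofBijective_apply, Matrix.mulVecLin_apply] using h

lemma Nf_lmod (v : V → ℝ) : (Nf G hconn).symm (lmod G *ᵥ v) = v := by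
  have h : (Nf G hconn) v = lmod G *ᵥ v := by
    simp only [Nf, LinearEquiv.ofBijective_apply, Matrix.mulVecLin_apply]
  rw [← h, LinearEquiv.symm_apply_apply]

lemma Nf_dot_symm (v w : V → ℝ) :
    v ⬝ᵥ (Nf G hconn).symm w = (Nf G hconn).symm v ⬝ᵥ w := by
  calc v ⬝ᵥ (Nf G hconn).symm w
      = (lmod G *ᵥ (Nf G hconn).symm v) ⬝ᵥ (Nf G hconn).symm w := by rw [lmod_Nf]
    _ = (Nf G hconn).symm w ⬝ᵥ (lmod G *ᵥ (Nf G hconn).symm v) := dotProduct_comm _ _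
    _ = (Nf G hconn).symm v ⬝ᵥ (lmod G *ᵥ (Nf G hconn).symm w) := dot_lmod_symm _ _
    _ = (Nf G hconn).symm v ⬝ᵥ w := by rw [lmod_Nf]

lemma lmod_ones (hconn : G.Connected) : lmod G *ᵥ (fun _ => (1:ℝ)) = (fun _ => (1:ℝ)) := by
  funext u
  rw [lmod_mulVec, lap_mulVec_const]
  have hcard : (Fintype.card V : ℝ) ≠ 0 := by
    have := hconn.nonempty
    exact_mod_cast Fintype.card_ne_zero
  simp [inv_mul_cancel₀ hcard]

lemma Nf_ones : (Nf G hconn).symm (fun _ => (1:ℝ)) = (fun _ => (1:ℝ)) := by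
  conv_lhs => rw [← lmod_ones hconn]
  exact Nf_lmod hconn _

lemma sum_Nf (w : V → ℝ) : ∑ z, (Nf G hconn).symm w z = ∑ z, w z := by
  have h1 : (fun _ => (1:ℝ)) ⬝ᵥ (Nf G hconn).symm w = (Nf G hconn).symm (fun _ => 1) ⬝ᵥ w :=
    Nf_dot_symm hconn _ _
  rw [Nf_ones] at h1
  simpa [dotProduct] using h1

lemma lap_mulVec_Nf {w : V → ℝ} (hw : ∑ z, w z = 0) :
    lap G *ᵥ ((Nf G hconn).symm w) = w := by
  funext u
  have h := lmod_Nf hconn w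
  have h2 := congrFun h u
  rw [lmod_mulVec, sum_Nf hconn, hw] at h2
  simpa using h2

lemma Nf_dot_pos {w : V → ℝ} (hw : w ≠ 0) : 0 < w ⬝ᵥ (Nf G hconn).symm w := by
  set v := (Nf G hconn).symm w with hv
  have hvw : lmod G *ᵥ v = w := lmod_Nf hconn w
  have hvne : v ≠ 0 := by
    intro h0
    apply hw
    rw [← hvw, h0]
    funext u; simp [Matrix.mulVec_zero]
  have : w ⬝ᵥ v = v ⬝ᵥ (lmod G *ᵥ v) := by
    rw [← hvw, dotProduct_comm, dot_lmod_symm]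
  rw [this, dot_lmod_self]
  have h1 := energy_nonneg (G := G) v
  rcases eq_or_lt_of_le h1 with he | hlt
  · -- energy zero: v const nonzero, sum ≠ 0
    have hc : ∀ a b, v a = v b := fun a b => by
      obtain ⟨p⟩ := hconn.preconnected a b
      exact eq_of_walk (fun s t hst => adj_eq_of_energy_zero he.symm hst) p
    obtain ⟨u0, hu0⟩ : ∃ u0, v u0 ≠ 0 := by
      by_contra hno
      push_neg at hno
      exact hvne (funext fun u => hno u)
    have hsum : ∑ u, v u = (Fintype.card V : ℝ) * v u0 := by
      rw [Finset.sum_congr rfl fun u _ => hc u u0, Finset.sum_const, nsmul_eq_mul,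
        Finset.card_univ]
    have hcard : (0:ℝ) < (Fintype.card V : ℝ) := by
      have := hconn.nonempty; exact_mod_cast Fintype.card_pos
    have : (0:ℝ) < (Fintype.card V : ℝ)⁻¹ * (∑ u, v u)^2 := by
      rw [hsum]
      positivity
    linarith
  · have : (0:ℝ) ≤ (Fintype.card V : ℝ)⁻¹ * (∑ u, v u)^2 := by positivity
    linarith

noncomputable def Nmat (G : SimpleGraph V) [Fintype V] (hconn : G.Connected) (a b : V) : ℝ :=
  (Nf G hconn).symm (Pi.single b 1) a

lemma Nmat_symm (a b : V) : Nmat G hconn a b = Nmat G hconn b a := by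
  have h := Nf_dot_symm hconn (Pi.single a (1:ℝ)) (Pi.single b 1)
  rw [single_dotProduct, dotProduct_single] at h
  simpa [Nmat] using h

lemma sum_Nmat (a : V) : ∑ z, Nmat G hconn a z = 1 := by
  have h1 : (∑ z : V, Pi.single z (1:ℝ)) = (fun _ => (1:ℝ)) :=
    Finset.univ_sum_single (fun _ : V => (1:ℝ))
  have h3 := congrFun
    (map_sum ((Nf G hconn).symm : (V → ℝ) →ₗ[ℝ] (V → ℝ))
      (fun z : V => Pi.single z (1:ℝ)) Finset.univ) a
  simp only [LinearEquiv.coe_coe] at h3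
  rw [h1, Nf_ones hconn] at h3
  simp only [Finset.sum_apply] at h3
  simpa [Nmat] using h3.symm

lemma Nf_single_sub (x y : V) :
    (Nf G hconn).symm (Pi.single x 1 - Pi.single y 1)
      = fun z => Nmat G hconn z x - Nmat G hconn z y := by
  rw [map_sub]
  funext z
  simp [Nmat, Pi.sub_apply]

noncomputable def resist (G : SimpleGraph V) [Fintype V] (hconn : G.Connected) (a b : V) : ℝ :=
  Nmat G hconn a a + Nmat G hconn b b - 2 * Nmat G hconn a b

lemma resist_self (a : V) : resist G hconn a a = 0 := by
  rw [resist]; ring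

lemma uvec_props (a b : V) (hab : a ≠ b) :
    let u : V → ℝ := Pi.single a 1 - Pi.single b 1
    (∑ z, u z = 0) ∧ (∀ g : V → ℝ, u ⬝ᵥ g = g a - g b) ∧ u ≠ 0 := by
  intro u
  have happ : ∀ z, u z = (if z = a then (1:ℝ) else 0) - (if z = b then (1:ℝ) else 0) := by
    intro z
    simp [u, Pi.sub_apply, Pi.single_apply]
  refine ⟨?_, ?_, ?_⟩
  · simp only [happ, Finset.sum_sub_distrib]
    rw [Finset.sum_ite_eq' Finset.univ a (fun _ => (1:ℝ)),
      Finset.sum_ite_eq' Finset.univ b (fun _ => (1:ℝ))]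
    simp
  · intro g
    simp only [dotProduct, happ, sub_mul, Finset.sum_sub_distrib, ite_mul,
      one_mul, zero_mul]
    rw [Finset.sum_ite_eq' Finset.univ a g, Finset.sum_ite_eq' Finset.univ b g]
    simp
  · intro h0
    have h := congrFun h0 a
    rw [happ a] at h
    simp [hab] at h

lemma eres_eq_resist (a b : V) : eres G a b = resist G hconn a b := by
  by_cases hab : a = b
  · subst hab
    rw [resist_self]
    have : {e : ℝ | ∃ φ : V → ℝ, φ a = 1 ∧ φ a = 0 ∧ e = energyFn G φ} = ∅ := by
      ext e
      simp only [Set.mem_setOf_eq, Set.mem_empty_iff_false, iff_false]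
      rintro ⟨φ, h1, h2, _⟩
      rw [h1] at h2; norm_num at h2
    rw [eres, this, Real.sInf_empty, _root_.inv_zero]
  · -- main case
    set u : V → ℝ := Pi.single a 1 - Pi.single b 1 with hu
    obtain ⟨hsum, hdot, hne⟩ := uvec_props a b hab
    set v : V → ℝ := (Nf G hconn).symm u with hvdef
    have hv : v = fun z => Nmat G hconn z a - Nmat G hconn z b := Nf_single_sub hconn a b
    set r : ℝ := resist G hconn a b with hrdef
    have hvab : v a - v b = r := by
      rw [hv, hrdef, resist]
      simp only
      rw [Nmat_symm hconn b a]
      ring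
    have hrpos : 0 < r := by
      have := Nf_dot_pos hconn hne
      rwa [← hvdef, hdot v, hvab] at this
    have hrne : r ≠ 0 := ne_of_gt hrpos
    have hlapv : lap G *ᵥ v = u := lap_mulVec_Nf hconn hsum
    set φs : V → ℝ := fun z => (v z - v b) / r with hφs
    have hφsa : φs a = 1 := by rw [hφs]; simp only [hvab]; exact div_self hrne
    have hφsb : φs b = 0 := by rw [hφs]; simp
    have hφeq : φs = r⁻¹ • (v - (fun _ => v b)) := by
      funext z
      simp only [hφs, Pi.smul_apply, Pi.sub_apply, smul_eq_mul]
      ring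
    have hlapφs : lap G *ᵥ φs = r⁻¹ • u := by
      rw [hφeq, Matrix.mulVec_smul, Matrix.mulVec_sub, hlapv]
      congr 1
      have : lap G *ᵥ (fun _ => v b) = 0 := funext fun w => lap_mulVec_const (v b) w
      rw [this, sub_zero]
    have henφs : energyFn G φs = r⁻¹ := by
      rw [energy_eq_dot, hlapφs, dotProduct_smul, smul_eq_mul,
        dotProduct_comm, hdot φs, hφsa, hφsb]
      ring
    have hlb : ∀ φ : V → ℝ, φ a = 1 → φ b = 0 → r⁻¹ ≤ energyFn G φ := by
      intro φ h1 h2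
      set g : V → ℝ := φ - φs with hg
      have hga : g a = 0 := by simp [hg, h1, hφsa]
      have hgb : g b = 0 := by simp [hg, h2, hφsb]
      have hφg : φ = φs + g := by funext z; simp [hg]
      have expand : energyFn G φ = energyFn G φs + 2 * (g ⬝ᵥ (lap G *ᵥ φs)) + energyFn G g := by
        rw [energy_eq_dot, energy_eq_dot, energy_eq_dot, hφg, Matrix.mulVec_add,
          add_dotProduct, dotProduct_add, dotProduct_add]
        rw [dot_lap_symm φs g]
        ring
      have hcross : g ⬝ᵥ (lap G *ᵥ φs) = 0 := by
        rw [hlapφs, dotProduct_smul, smul_eq_mul, dotProduct_comm,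
          hdot g, hga, hgb]
        ring
      have := energy_nonneg (G := G) g
      rw [expand, hcross, henφs]
      linarith
    have hmem : r⁻¹ ∈ {e : ℝ | ∃ φ : V → ℝ, φ a = 1 ∧ φ b = 0 ∧ e = energyFn G φ} :=
      ⟨φs, hφsa, hφsb, henφs.symm⟩
    have hlb' : ∀ e ∈ {e : ℝ | ∃ φ : V → ℝ, φ a = 1 ∧ φ b = 0 ∧ e = energyFn G φ}, r⁻¹ ≤ e := by
      rintro e ⟨φ, h1, h2, rfl⟩
      exact hlb φ h1 h2
    have : sInf {e : ℝ | ∃ φ : V → ℝ, φ a = 1 ∧ φ b = 0 ∧ e = energyFn G φ} = r⁻¹ :=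
      le_antisymm (csInf_le ⟨r⁻¹, hlb'⟩ hmem) (le_csInf ⟨r⁻¹, hmem⟩ hlb')
    rw [eres, this, inv_inv]

/-! ### Hitting time machinery -/

lemma degR_nonneg (G : SimpleGraph V) (u : V) : 0 ≤ degR G u := by
  rw [degR]; positivity

lemma degR_pos (hconn : G.Connected) (hc2 : 1 < Fintype.card V) (u : V) :
    0 < degR G u := by
  obtain ⟨v, hv⟩ := Fintype.exists_ne_of_one_lt_card hc2 u
  obtain ⟨p⟩ := hconn.preconnected u v
  have hne : ∃ w, G.Adj u w := by
    cases p with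
    | nil => exact absurd rfl hv.symm
    | cons h _ => exact ⟨_, h⟩
  obtain ⟨w, hw⟩ := hne
  rw [degR]
  have : w ∈ Finset.univ.filter (fun z => G.Adj u z) := by
    simp [hw]
  have hpos : 0 < (Finset.univ.filter (fun z => G.Adj u z)).card :=
    Finset.card_pos.mpr ⟨w, this⟩
  exact_mod_cast hpos

lemma degR_le_card (G : SimpleGraph V) (u : V) : degR G u ≤ (Fintype.card V : ℝ) := by
  rw [degR]
  have h := Finset.card_filter_le Finset.univ (fun y => G.Adj u y)
  rw [Finset.card_univ] at h
  exact_mod_cast h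

lemma hitMat_nonneg (G : SimpleGraph V) (y u v : V) : 0 ≤ hitMat G y u v := by
  rw [hitMat, Matrix.of_apply]
  have := degR_nonneg G u
  split_ifs <;> positivity

lemma hitMat_pow_nonneg (G : SimpleGraph V) (y : V) (k : ℕ) (u v : V) :
    0 ≤ (hitMat G y ^ k) u v := by
  induction k generalizing u v with
  | zero =>
    rw [pow_zero]
    by_cases h : u = v <;> simp [Matrix.one_apply, h]
  | succ k ih =>
    rw [pow_succ, Matrix.mul_apply]
    exact Finset.sum_nonneg fun w _ => mul_nonneg (ih u w) (hitMat_nonneg G y w v)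

/-- Survival probability after `k` steps. -/
noncomputable def survn (G : SimpleGraph V) [Fintype V] (y : V) (k : ℕ) (u : V) : ℝ :=
  ∑ z, (hitMat G y ^ k) u z

lemma survn_zero (G : SimpleGraph V) (y u : V) : survn G y 0 u = 1 := by
  rw [survn]
  rw [Finset.sum_congr rfl fun z _ => by rw [pow_zero]]
  show ∑ z, (1 : Matrix V V ℝ) u z = 1
  simp [Matrix.one_apply]

lemma survn_nonneg (G : SimpleGraph V) (y : V) (k : ℕ) (u : V) : 0 ≤ survn G y k u :=
  Finset.sum_nonneg fun z _ => hitMat_pow_nonneg G y k u z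

lemma survn_add (G : SimpleGraph V) (y : V) (a b : ℕ) (u : V) :
    survn G y (a + b) u = ∑ v, (hitMat G y ^ a) u v * survn G y b v := by
  rw [survn, Finset.sum_congr rfl fun z _ => by rw [pow_add, Matrix.mul_apply]]
  rw [Finset.sum_comm]
  refine Finset.sum_congr rfl fun v _ => ?_
  rw [survn, Finset.mul_sum]

lemma survn_succ (G : SimpleGraph V) (y : V) (k : ℕ) (u : V) :
    survn G y (k + 1) u = ∑ v, hitMat G y u v * survn G y k v := by
  have := survn_add G y 1 k u
  rw [add_comm 1 k] at this
  rw [this]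
  refine Finset.sum_congr rfl fun v _ => ?_
  rw [pow_one]

lemma survn_one (hconn : G.Connected) (hc2 : 1 < Fintype.card V) (y u : V) :
    survn G y 1 u = 1 - (if G.Adj u y then (degR G u)⁻¹ else 0) := by
  have hdeg := degR_pos hconn hc2 u
  have key : ∀ z, (hitMat G y ^ 1) u z
      = (if G.Adj u z then (degR G u)⁻¹ else 0)
        - (if z = y then (if G.Adj u y then (degR G u)⁻¹ else 0) else 0) := by
    intro z
    rw [pow_one, hitMat, Matrix.of_apply]
    by_cases hz : z = y
    · subst hz; simp
    · simp [hz]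
  rw [survn, Finset.sum_congr rfl fun z _ => key z, Finset.sum_sub_distrib, sum_ite_adj,
    Finset.sum_ite_eq' Finset.univ y (fun _ => if G.Adj u y then (degR G u)⁻¹ else 0)]
  simp [mul_inv_cancel₀ (ne_of_gt hdeg)]

lemma survn_le_one (hconn : G.Connected) (hc2 : 1 < Fintype.card V) (y : V) (k : ℕ) (u : V) :
    survn G y k u ≤ 1 := by
  induction k generalizing u with
  | zero => rw [survn_zero]
  | succ k ih =>
    rw [survn_succ]
    have h1 : ∑ v, hitMat G y u v * survn G y k v ≤ ∑ v, hitMat G y u v := by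
      refine Finset.sum_le_sum fun v _ => ?_
      have := hitMat_nonneg G y u v
      nlinarith [ih v, survn_nonneg G y k v]
    have h2 : ∑ v, hitMat G y u v = survn G y 1 u := by
      rw [survn]
      exact Finset.sum_congr rfl fun z _ => by rw [pow_one]
    rw [h2] at h1
    refine le_trans h1 ?_
    rw [survn_one hconn hc2]
    have hdeg := degR_pos hconn hc2 u
    split_ifs with h
    · have : 0 < (degR G u)⁻¹ := by positivity
      linarith
    · simp

lemma survn_mono (hconn : G.Connected) (hc2 : 1 < Fintype.card V) (y : V) (a t : ℕ) (u : V) :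
    survn G y (a + t) u ≤ survn G y a u := by
  rw [survn_add]
  have : survn G y a u = ∑ v, (hitMat G y ^ a) u v := rfl
  rw [this]
  refine Finset.sum_le_sum fun v _ => ?_
  have h1 := hitMat_pow_nonneg G y a u v
  nlinarith [survn_le_one hconn hc2 y t v, survn_nonneg G y t v]

lemma dist_pred (hconn : G.Connected) {u y : V} (h : u ≠ y) :
    ∃ w, G.Adj u w ∧ G.dist w y = G.dist u y - 1 ∧ G.dist u y ≠ 0 := by
  obtain ⟨p, hp⟩ := (hconn.preconnected u y).exists_walk_length_eq_dist
  have hd0 : G.dist u y ≠ 0 := by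
    intro h0
    rcases SimpleGraph.dist_eq_zero_iff_eq_or_not_reachable.mp h0 with h1 | h2
    · exact h h1
    · exact h2 (hconn.preconnected u y)
  cases p with
  | nil => exact absurd hp.symm (by simpa using hd0)
  | @cons _ w _ hadj q =>
    refine ⟨w, hadj, ?_, hd0⟩
    have hq : q.length = G.dist u y - 1 := by
      rw [SimpleGraph.Walk.length_cons] at hp
      omega
    have h1 : G.dist w y ≤ G.dist u y - 1 := hq ▸ SimpleGraph.dist_le q
    have h2 : G.dist u y ≤ 1 + G.dist w y := by
      have := hconn.dist_triangle (u := u) (v := w) (w := y)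
      have huw : G.dist u w ≤ 1 := by
        have := SimpleGraph.dist_le (SimpleGraph.Walk.cons hadj SimpleGraph.Walk.nil)
        simpa using this
      omega
    omega

lemma survn_dist_bound (hconn : G.Connected) (hc2 : 1 < Fintype.card V) (y : V) :
    ∀ d u, u ≠ y → G.dist u y = d → ∀ k, d ≤ k →
      survn G y k u ≤ 1 - ((Fintype.card V : ℝ))⁻¹ ^ d := by
  have hcard : (0:ℝ) < (Fintype.card V : ℝ) := by exact_mod_cast Nat.lt_of_lt_of_le Nat.zero_lt_one hc2.le
  intro d
  induction d with
  | zero =>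
    intro u hu hd _ _
    rcases SimpleGraph.dist_eq_zero_iff_eq_or_not_reachable.mp hd with h1 | h2
    · exact absurd h1 hu
    · exact absurd (hconn.preconnected u y) h2
  | succ d ih =>
    intro u hu hd k hk
    obtain ⟨w, hadj, hw, _⟩ := dist_pred hconn hu
    rw [hd] at hw
    simp only [Nat.add_sub_cancel] at hw
    obtain ⟨k', rfl⟩ : ∃ k', k = k' + 1 := ⟨k - 1, by omega⟩
    have hk' : d ≤ k' := by omega
    have hdegpos := degR_pos hconn hc2 u
    have hdeginv : (Fintype.card V : ℝ)⁻¹ ≤ (degR G u)⁻¹ :=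
      inv_anti₀ hdegpos (degR_le_card G u)
    rw [survn_succ]
    by_cases hwy : w = y
    · -- d = 0, adjacent to y
      have hd1 : d = 0 := by
        have h0 : G.dist w y = 0 := by
          rw [hwy]
          exact SimpleGraph.dist_eq_zero_iff_eq_or_not_reachable.mpr (Or.inl rfl)
        omega
      subst hd1
      have h1 : ∑ v, hitMat G y u v * survn G y k' v ≤ ∑ v, hitMat G y u v := by
        refine Finset.sum_le_sum fun v _ => ?_
        have := hitMat_nonneg G y u v
        nlinarith [survn_le_one hconn hc2 y k' v, survn_nonneg G y k' v]
      have h2 : ∑ v, hitMat G y u v = survn G y 1 u := by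
        rw [survn]
        exact Finset.sum_congr rfl fun z _ => by rw [pow_one]
      have hadjy : G.Adj u y := by rwa [hwy] at hadj
      have h3 : survn G y 1 u = 1 - (degR G u)⁻¹ := by
        rw [survn_one hconn hc2, if_pos hadjy]
      rw [pow_one]
      rw [h2, h3] at h1
      linarith
    · -- w ≠ y, use IH
      have hMuw : hitMat G y u w = (degR G u)⁻¹ := by
        rw [hitMat, Matrix.of_apply, if_neg hwy, if_pos hadj]
      have hIH := ih w hwy hw k' hk'
      have hsplit : ∑ v, hitMat G y u v * survn G y k' v
          = hitMat G y u w * survn G y k' w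
            + ∑ v ∈ Finset.univ.erase w, hitMat G y u v * survn G y k' v :=
        (Finset.add_sum_erase Finset.univ _ (Finset.mem_univ w)).symm
      have hrest : ∑ v ∈ Finset.univ.erase w, hitMat G y u v * survn G y k' v
          ≤ ∑ v ∈ Finset.univ.erase w, hitMat G y u v := by
        refine Finset.sum_le_sum fun v _ => ?_
        have := hitMat_nonneg G y u v
        nlinarith [survn_le_one hconn hc2 y k' v, survn_nonneg G y k' v]
      have hrest2 : ∑ v ∈ Finset.univ.erase w, hitMat G y u v
          = survn G y 1 u - hitMat G y u w := by
        have := Finset.add_sum_erase Finset.univ (fun v => hitMat G y u v) (Finset.mem_univ w)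
        have h2 : ∑ v, hitMat G y u v = survn G y 1 u := by
          rw [survn]
          exact Finset.sum_congr rfl fun z _ => by rw [pow_one]
        linarith [this, h2]
      have hκd : (0:ℝ) ≤ (Fintype.card V : ℝ)⁻¹ ^ d := by positivity
      have hs1 : survn G y 1 u ≤ 1 := survn_le_one hconn hc2 y 1 u
      have hdinv : (0:ℝ) ≤ (degR G u)⁻¹ := by positivity
      have hkey : (Fintype.card V : ℝ)⁻¹ ^ (d+1) ≤ (degR G u)⁻¹ * (Fintype.card V : ℝ)⁻¹ ^ d := by
        rw [pow_succ']
        exact mul_le_mul_of_nonneg_right hdeginv hκd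
      calc ∑ v, hitMat G y u v * survn G y k' v
          = hitMat G y u w * survn G y k' w
            + ∑ v ∈ Finset.univ.erase w, hitMat G y u v * survn G y k' v := hsplit
        _ ≤ (degR G u)⁻¹ * (1 - (Fintype.card V : ℝ)⁻¹ ^ d)
            + (survn G y 1 u - hitMat G y u w) := by
            refine add_le_add ?_ (hrest.trans_eq hrest2)
            rw [hMuw]
            exact mul_le_mul_of_nonneg_left hIH hdinv
        _ ≤ 1 - (degR G u)⁻¹ * (Fintype.card V : ℝ)⁻¹ ^ d := by
            rw [hMuw]; nlinarith
        _ ≤ 1 - (Fintype.card V : ℝ)⁻¹ ^ (d+1) := by linarith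

lemma dist_lt_card (hconn : G.Connected) (u v : V) : G.dist u v < Fintype.card V := by
  classical
  obtain ⟨p⟩ := hconn.preconnected u v
  have h1 : G.dist u v ≤ p.bypass.length := SimpleGraph.dist_le p.bypass
  have h2 : p.bypass.length < Fintype.card V := p.bypass_isPath.length_lt
  omega

/-- abbreviation for the decay factor -/
noncomputable def theta (V : Type*) [Fintype V] : ℝ :=
  1 - ((Fintype.card V : ℝ))⁻¹ ^ (Fintype.card V)

lemma kappa_le_one (hc2 : 1 < Fintype.card V) : ((Fintype.card V : ℝ))⁻¹ ≤ 1 := by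
  have h1 : (1:ℝ) ≤ (Fintype.card V : ℝ) := by exact_mod_cast hc2.le
  rw [← one_div]
  exact div_le_one_of_le₀ h1 (by positivity)

lemma theta_nonneg (hc2 : 1 < Fintype.card V) : 0 ≤ theta V := by
  have h0 : (0:ℝ) ≤ ((Fintype.card V : ℝ))⁻¹ := by positivity
  have h1 : ((Fintype.card V : ℝ))⁻¹ ^ (Fintype.card V) ≤ 1 :=
    pow_le_one₀ h0 (kappa_le_one hc2)
  rw [theta]; linarith

lemma theta_lt_one (hc2 : 1 < Fintype.card V) : theta V < 1 := by
  have hcard : (0:ℝ) < (Fintype.card V : ℝ) := by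
    exact_mod_cast Nat.lt_of_lt_of_le Nat.zero_lt_one hc2.le
  have : (0:ℝ) < ((Fintype.card V : ℝ))⁻¹ ^ (Fintype.card V) := by positivity
  rw [theta]; linarith

lemma survn_theta (hconn : G.Connected) (hc2 : 1 < Fintype.card V) (y u : V) :
    survn G y (Fintype.card V) u ≤ theta V := by
  have h0 : (0:ℝ) ≤ ((Fintype.card V : ℝ))⁻¹ := by positivity
  have hbd : ∀ v, v ≠ y → ∀ k, G.dist v y ≤ k → survn G y k v ≤ theta V := by
    intro v hv k hk
    have h1 := survn_dist_bound hconn hc2 y (G.dist v y) v hv rfl k hk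
    have h2 : ((Fintype.card V : ℝ))⁻¹ ^ (Fintype.card V)
        ≤ ((Fintype.card V : ℝ))⁻¹ ^ (G.dist v y) :=
      pow_le_pow_of_le_one h0 (kappa_le_one hc2) (dist_lt_card hconn v y).le
    rw [theta]; linarith
  by_cases hu : u = y
  · rw [hu]
    have hm : Fintype.card V = (Fintype.card V - 1) + 1 := by omega
    rw [hm, survn_succ]
    have hterm : ∀ v, hitMat G y y v * survn G y (Fintype.card V - 1) v
        ≤ hitMat G y y v * theta V := by
      intro v
      by_cases hv : v = y
      · subst hv
        have hz : hitMat G v v v = 0 := by rw [hitMat, Matrix.of_apply, if_pos rfl]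
        rw [hz]; simp
      · exact mul_le_mul_of_nonneg_left
          (hbd v hv _ (by have := dist_lt_card hconn v y; omega))
          (hitMat_nonneg G y y v)
    calc ∑ v, hitMat G y y v * survn G y (Fintype.card V - 1) v
        ≤ ∑ v, hitMat G y y v * theta V := Finset.sum_le_sum fun v _ => hterm v
      _ = survn G y 1 y * theta V := by
          rw [← Finset.sum_mul]
          congr 1
          rw [survn]
          exact Finset.sum_congr rfl fun z _ => by rw [pow_one]
      _ ≤ 1 * theta V := by
          exact mul_le_mul_of_nonneg_right (survn_le_one hconn hc2 y 1 y) (theta_nonneg hc2)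
      _ = theta V := one_mul _
  · have hmono : survn G y (Fintype.card V) u ≤ survn G y (G.dist u y) u := by
      have hm : Fintype.card V = G.dist u y + (Fintype.card V - G.dist u y) := by
        have := dist_lt_card hconn u y; omega
      rw [hm]
      exact survn_mono hconn hc2 y _ _ u
    exact hmono.trans (hbd u hu _ le_rfl)

lemma survn_geo (hconn : G.Connected) (hc2 : 1 < Fintype.card V) (y u : V) (k : ℕ) :
    survn G y (k + Fintype.card V) u ≤ theta V * survn G y k u := by
  rw [survn_add]
  have : theta V * survn G y k u = ∑ v, (hitMat G y ^ k) u v * theta V := by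
    rw [← Finset.sum_mul, mul_comm]
    congr 1
  rw [this]
  exact Finset.sum_le_sum fun v _ => mul_le_mul_of_nonneg_left
    (survn_theta hconn hc2 y v) (hitMat_pow_nonneg G y k u v)

lemma survn_pow_bound (hconn : G.Connected) (hc2 : 1 < Fintype.card V) (y u : V) (k : ℕ) :
    survn G y k u ≤ theta V ^ (k / Fintype.card V) := by
  induction k using Nat.strong_induction_on with
  | _ k ih =>
    by_cases hk : k < Fintype.card V
    · rw [Nat.div_eq_of_lt hk, pow_zero]
      exact survn_le_one hconn hc2 y k u
    · push_neg at hk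
      have hpos : 0 < Fintype.card V := by omega
      have hm : k = (k - Fintype.card V) + Fintype.card V := by omega
      have h1 : survn G y k u ≤ theta V * survn G y (k - Fintype.card V) u := by
        conv_lhs => rw [hm]
        exact survn_geo hconn hc2 y u _
      have h2 := ih (k - Fintype.card V) (by omega)
      have h3 : k / Fintype.card V = (k - Fintype.card V) / Fintype.card V + 1 :=
        Nat.div_eq_sub_div hpos hk
      rw [h3, pow_succ, mul_comm]
      calc survn G y k u ≤ theta V * survn G y (k - Fintype.card V) u := h1
        _ ≤ theta V * theta V ^ ((k - Fintype.card V) / Fintype.card V) :=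
            mul_le_mul_of_nonneg_left h2 (theta_nonneg hc2)

lemma sum_range_pow_div_le (θ : ℝ) (hθ0 : 0 ≤ θ) (hθ1 : θ < 1) (n₀ : ℕ) (hn₀ : 0 < n₀)
    (K : ℕ) : ∑ k ∈ Finset.range K, θ ^ (k / n₀) ≤ (n₀ : ℝ) * (1 - θ)⁻¹ := by
  have hfib := Finset.sum_fiberwise_of_maps_to (s := Finset.range K) (t := Finset.range K)
    (g := fun k => k / n₀) (fun i hi => by
      simp only [Finset.mem_range] at hi ⊢
      exact lt_of_le_of_lt (Nat.div_le_self i n₀) hi) (fun k => θ ^ (k / n₀))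
  rw [← hfib]
  have hinner : ∀ m ∈ Finset.range K,
      ∑ k ∈ Finset.range K |>.filter (fun k => k / n₀ = m), θ ^ (k / n₀)
        ≤ (n₀ : ℝ) * θ ^ m := by
    intro m _
    have heq : ∀ k ∈ Finset.range K |>.filter (fun k => k / n₀ = m),
        θ ^ (k / n₀) = θ ^ m := by
      intro k hk
      simp only [Finset.mem_filter] at hk
      rw [hk.2]
    rw [Finset.sum_congr rfl heq, Finset.sum_const, nsmul_eq_mul]
    have hsub : (Finset.range K |>.filter (fun k => k / n₀ = m)) ⊆
        Finset.Ico (n₀ * m) (n₀ * m + n₀) := by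
      intro k hk
      simp only [Finset.mem_filter, Finset.mem_range] at hk
      obtain ⟨hk1, hk2⟩ := hk
      have h1 := Nat.mod_add_div k n₀
      have h2 := Nat.mod_lt k hn₀
      rw [Finset.mem_Ico, ← hk2]
      constructor
      · conv_rhs => rw [← h1]
        exact Nat.le_add_left _ _
      · conv_lhs => rw [← h1]
        rw [Nat.add_comm (n₀ * (k / n₀)) n₀]
        exact Nat.add_lt_add_right h2 _
    have hcard : (Finset.range K |>.filter (fun k => k / n₀ = m)).card ≤ n₀ := by
      have := Finset.card_le_card hsub
      rw [Nat.card_Ico] at this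
      omega
    have : (0:ℝ) ≤ θ ^ m := pow_nonneg hθ0 m
    have hc : ((Finset.range K |>.filter (fun k => k / n₀ = m)).card : ℝ) ≤ (n₀ : ℝ) := by
      exact_mod_cast hcard
    nlinarith
  calc ∑ m ∈ Finset.range K, ∑ k ∈ Finset.range K |>.filter (fun k => k / n₀ = m),
        θ ^ (k / n₀)
      ≤ ∑ m ∈ Finset.range K, (n₀ : ℝ) * θ ^ m := Finset.sum_le_sum hinner
    _ = (n₀ : ℝ) * ∑ m ∈ Finset.range K, θ ^ m := by rw [Finset.mul_sum]
    _ ≤ (n₀ : ℝ) * (1 - θ)⁻¹ := by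
        have hne : θ ≠ 1 := ne_of_lt hθ1
        have h1θ : 0 < 1 - θ := by linarith
        have hθK : (0:ℝ) ≤ θ ^ K := pow_nonneg hθ0 K
        have hgeo : ∑ m ∈ Finset.range K, θ ^ m = (1 - θ ^ K) / (1 - θ) := by
          rw [geom_sum_eq hne, ← neg_sub (θ ^ K) 1, ← neg_sub θ 1, neg_div_neg_eq]
        have hle : (1 - θ ^ K) / (1 - θ) ≤ 1 / (1 - θ) := by
          gcongr
          linarith
        have hsum : ∑ m ∈ Finset.range K, θ ^ m ≤ (1 - θ)⁻¹ := by
          rw [hgeo, ← one_div]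
          exact hle
        have hn0 : (0:ℝ) ≤ (n₀ : ℝ) := by positivity
        exact mul_le_mul_of_nonneg_left hsum hn0

lemma survn_summable (hconn : G.Connected) (hc2 : 1 < Fintype.card V) (y u : V) :
    Summable (fun k => survn G y k u) := by
  apply summable_of_sum_range_le (c := (Fintype.card V : ℝ) * (1 - theta V)⁻¹)
    (fun k => survn_nonneg G y k u)
  intro K
  calc ∑ k ∈ Finset.range K, survn G y k u
      ≤ ∑ k ∈ Finset.range K, theta V ^ (k / Fintype.card V) :=
        Finset.sum_le_sum fun k _ => survn_pow_bound hconn hc2 y u k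
    _ ≤ (Fintype.card V : ℝ) * (1 - theta V)⁻¹ :=
        sum_range_pow_div_le _ (theta_nonneg hc2) (theta_lt_one hc2) _
          (by omega) K

noncomputable def Sfun (G : SimpleGraph V) [Fintype V] (y : V) : V → ℝ :=
  fun u => ∑' k, survn G y k u

lemma Sfun_rec (hconn : G.Connected) (hc2 : 1 < Fintype.card V) (y u : V) :
    Sfun G y u = 1 + ∑ v, hitMat G y u v * Sfun G y v := by
  rw [Sfun, Summable.tsum_eq_zero_add (survn_summable hconn hc2 y u), survn_zero]
  congr 1
  have h1 : ∀ k : ℕ, survn G y (k+1) u = ∑ v, hitMat G y u v * survn G y k v :=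
    fun k => survn_succ G y k u
  rw [tsum_congr h1,
    Summable.tsum_finsetSum (fun v _ => Summable.mul_left _ (survn_summable hconn hc2 y v))]
  exact Finset.sum_congr rfl fun v _ => tsum_mul_left

lemma hitting_eq_Sfun {x y : V} (hxy : x ≠ y) : hitting G x y = Sfun G y x := by
  rw [hitting, if_neg hxy]
  rfl

lemma sum_lap_mulVec (ψ : V → ℝ) : ∑ u, (lap G *ᵥ ψ) u = 0 := by
  have h1 : ∑ u, (lap G *ᵥ ψ) u = (fun _ => (1:ℝ)) ⬝ᵥ (lap G *ᵥ ψ) := by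
    rw [dotProduct]
    exact Finset.sum_congr rfl fun u _ => (one_mul _).symm
  rw [h1, dot_lap_symm]
  have h2 : lap G *ᵥ (fun _ => (1:ℝ)) = 0 := funext fun u => lap_mulVec_const 1 u
  rw [h2]
  simp [dotProduct]

lemma lap_hfun (hconn : G.Connected) (hc2 : 1 < Fintype.card V) (y u : V) (hu : u ≠ y) :
    (lap G *ᵥ (fun v => if v = y then 0 else Sfun G y v)) u = degR G u := by
  set hf : V → ℝ := fun v => if v = y then 0 else Sfun G y v with hhf
  have hdeg := degR_pos hconn hc2 u
  have hperv : ∀ v, hitMat G y u v * Sfun G y v = (degR G u)⁻¹ * (if G.Adj u v then hf v else 0) := by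
    intro v
    by_cases hvy : v = y
    · subst hvy
      rw [hitMat, Matrix.of_apply, if_pos rfl]
      simp [hhf]
    · rw [hitMat, Matrix.of_apply, if_neg hvy]
      by_cases hadj : G.Adj u v
      · rw [if_pos hadj, if_pos hadj]
        simp only [hhf, if_neg hvy]
      · rw [if_neg hadj, if_neg hadj]
        simp
  have hrec := Sfun_rec hconn hc2 y u
  rw [Finset.sum_congr rfl fun v _ => hperv v, ← Finset.mul_sum] at hrec
  rw [lap_mulVec]
  have hfu : hf u = Sfun G y u := if_neg hu
  rw [hfu, hrec]
  set T := ∑ v, (if G.Adj u v then hf v else 0)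
  have hne' : degR G u ≠ 0 := ne_of_gt hdeg
  field_simp
  ring

lemma hitting_master (hconn : G.Connected) (hc2 : 1 < Fintype.card V)
    (hhand : ∑ z, degR G z = 2 * (Fintype.card V : ℝ)) (x y : V) :
    hitting G x y
      = (Nf G hconn).symm (degR G) x - (Nf G hconn).symm (degR G) y
        - 2 * (Fintype.card V : ℝ) * Nmat G hconn x y
        + 2 * (Fintype.card V : ℝ) * Nmat G hconn y y := by
  set nR : ℝ := (Fintype.card V : ℝ) with hnR
  set w : V → ℝ := fun z => degR G z - 2*nR * (if z = y then (1:ℝ) else 0) with hwdef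
  have hsumw : ∑ z, w z = 0 := by
    simp only [hwdef]
    rw [Finset.sum_sub_distrib, ← Finset.mul_sum,
      Finset.sum_ite_eq' Finset.univ y (fun _ => (1:ℝ)), hhand]
    simp
  set p : V → ℝ := (Nf G hconn).symm w with hp
  have hlapp : lap G *ᵥ p = w := lap_mulVec_Nf hconn hsumw
  set φh : V → ℝ := fun u => p u - p y with hφh
  have hlapφh : lap G *ᵥ φh = w := by
    have heq : φh = p - (fun _ => p y) := by funext z; simp [hφh]
    rw [heq, Matrix.mulVec_sub, hlapp]
    have hz : lap G *ᵥ (fun _ => p y) = 0 := funext fun u => lap_mulVec_const _ u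
    rw [hz, sub_zero]
  have hexp : ∀ u, φh u = (Nf G hconn).symm (degR G) u - (Nf G hconn).symm (degR G) y
      - 2 * nR * Nmat G hconn u y + 2 * nR * Nmat G hconn y y := by
    intro u
    have hwfun : w = degR G - (2*nR) • (Pi.single y (1:ℝ) : V → ℝ) := by
      funext z
      simp only [hwdef, Pi.sub_apply, Pi.smul_apply, smul_eq_mul, Pi.single_apply]
    have hw : (Nf G hconn).symm w
        = (Nf G hconn).symm (degR G) - (2*nR) • (Nf G hconn).symm (Pi.single y (1:ℝ)) := by
      rw [hwfun, map_sub, _root_.map_smul]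
    have happ : ∀ z, p z = (Nf G hconn).symm (degR G) z - 2*nR * Nmat G hconn z y := by
      intro z
      have hN : Nmat G hconn z y = (Nf G hconn).symm (Pi.single y (1:ℝ)) z := rfl
      rw [hp, hw, hN]
      simp only [Pi.sub_apply, Pi.smul_apply, smul_eq_mul]
    have hb : φh u = p u - p y := rfl
    rw [hb, happ u, happ y]
    ring
  by_cases hxy : x = y
  · rw [hxy, hitting, if_pos rfl]
    ring
  · set hf : V → ℝ := fun v => if v = y then 0 else Sfun G y v with hhf
    set ψ : V → ℝ := φh - hf with hψ
    have hlapψ : lap G *ᵥ ψ = 0 := by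
      have hsub : lap G *ᵥ ψ = (lap G *ᵥ φh) - (lap G *ᵥ hf) := by
        rw [hψ, Matrix.mulVec_sub]
      have hne : ∀ u, u ≠ y → (lap G *ᵥ ψ) u = 0 := by
        intro u hu
        have h1 : (lap G *ᵥ hf) u = degR G u := lap_hfun hconn hc2 y u hu
        have h2 : (lap G *ᵥ φh) u = w u := congrFun hlapφh u
        have h3 : w u = degR G u := by
          simp [hwdef, if_neg hu]
        have : (lap G *ᵥ ψ) u = (lap G *ᵥ φh) u - (lap G *ᵥ hf) u := by
          rw [hsub]; rfl
        rw [this, h1, h2, h3]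
        ring
      have hsum := sum_lap_mulVec (G := G) ψ
      have hy0 : (lap G *ᵥ ψ) y = 0 := by
        have hsplit := Finset.add_sum_erase Finset.univ
          (fun u => (lap G *ᵥ ψ) u) (Finset.mem_univ y)
        have hz : ∑ u ∈ Finset.univ.erase y, (lap G *ᵥ ψ) u = 0 :=
          Finset.sum_eq_zero fun u hu => hne u (Finset.ne_of_mem_erase hu)
        rw [hz] at hsplit
        rw [hsum] at hsplit
        linarith
      funext u
      by_cases hu : u = y
      · rw [hu]
        exact hy0
      · exact hne u hu
    have hψy : ψ y = 0 := by
      have h1 : φh y = 0 := by rw [hφh]; ring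
      have h2 : hf y = 0 := if_pos rfl
      rw [hψ, Pi.sub_apply, h1, h2, sub_zero]
    have hψx : ψ x = 0 := (const_of_lap_zero hconn hlapψ x y).trans hψy
    have hfx : φh x = hf x := by
      have h1 : ψ x = φh x - hf x := rfl
      rw [h1] at hψx
      linarith
    rw [hitting_eq_Sfun hxy]
    have h2 : Sfun G y x = hf x := (if_neg hxy).symm
    rw [h2, ← hfx, hexp x]

/-! ### distance to the cycle -/

noncomputable def dly (G : SimpleGraph V) [Fintype V] {l : ℕ} [NeZero l]
    (c : Fin l → V) (u : V) : ℕ :=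
  Finset.univ.inf'
    (Finset.univ_nonempty_iff.mpr ⟨⟨0, Nat.pos_of_ne_zero (NeZero.ne l)⟩⟩)
    (fun i => G.dist u (c i))

section Cyc

variable {l : ℕ} [NeZero l] {c : Fin l → V}

lemma dly_le (G : SimpleGraph V) (c : Fin l → V) (u : V) (i : Fin l) :
    dly G c u ≤ G.dist u (c i) :=
  Finset.inf'_le _ (Finset.mem_univ i)

lemma dly_exists (G : SimpleGraph V) (c : Fin l → V) (u : V) :
    ∃ i, dly G c u = G.dist u (c i) := by
  obtain ⟨i, _, h⟩ := Finset.exists_mem_eq_inf' _ (fun i : Fin l => G.dist u (c i))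
  exact ⟨i, h⟩

lemma dly_c (G : SimpleGraph V) (c : Fin l → V) (i : Fin l) : dly G c (c i) = 0 :=
  Nat.le_antisymm (by simpa [SimpleGraph.dist_self] using dly_le G c (c i) i) (Nat.zero_le _)

lemma dly_eq_zero (hconn : G.Connected) (u : V) (h : dly G c u = 0) : ∃ i, u = c i := by
  obtain ⟨i, hi⟩ := dly_exists G c u
  rw [h] at hi
  rcases SimpleGraph.dist_eq_zero_iff_eq_or_not_reachable.mp hi.symm with h1 | h2
  · exact ⟨i, h1⟩
  · exact absurd (hconn.preconnected u (c i)) h2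

lemma dly_lipschitz (hconn : G.Connected) {u v : V} (h : G.Adj u v) :
    dly G c v ≤ dly G c u + 1 := by
  obtain ⟨i, hi⟩ := dly_exists G c u
  have h1 : G.dist v (c i) ≤ G.dist v u + G.dist u (c i) := hconn.dist_triangle
  have h2 : G.dist v u ≤ 1 := by
    have := SimpleGraph.dist_le (SimpleGraph.Walk.cons h.symm SimpleGraph.Walk.nil)
    simpa using this
  have := dly_le G c v i
  omega

lemma dly_down (hconn : G.Connected) (u : V) (h : dly G c u ≠ 0) :
    ∃ w, G.Adj u w ∧ dly G c w = dly G c u - 1 := by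
  obtain ⟨i, hi⟩ := dly_exists G c u
  have hne : u ≠ c i := by
    intro he
    apply h
    rw [hi, he, SimpleGraph.dist_self]
  obtain ⟨w, hadj, hw, _⟩ := dist_pred hconn hne
  refine ⟨w, hadj, ?_⟩
  have h1 : dly G c w ≤ G.dist w (c i) := dly_le G c w i
  have h2 : dly G c u ≤ dly G c w + 1 := dly_lipschitz hconn hadj.symm
  omega

/-- down-degree, horizontal-degree, up-degree -/
noncomputable def ddeg (G : SimpleGraph V) [Fintype V] (c : Fin l → V) (u : V) : ℕ :=
  (Finset.univ.filter (fun v => G.Adj u v ∧ dly G c v < dly G c u)).card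
noncomputable def hdeg (G : SimpleGraph V) [Fintype V] (c : Fin l → V) (u : V) : ℕ :=
  (Finset.univ.filter (fun v => G.Adj u v ∧ dly G c v = dly G c u)).card
noncomputable def udeg (G : SimpleGraph V) [Fintype V] (c : Fin l → V) (u : V) : ℕ :=
  (Finset.univ.filter (fun v => G.Adj u v ∧ dly G c u < dly G c v)).card

lemma deg_split (G : SimpleGraph V) (c : Fin l → V) (u : V) :
    (Finset.univ.filter (fun v => G.Adj u v)).card
      = ddeg G c u + hdeg G c u + udeg G c u := by
  rw [ddeg, hdeg, udeg, Finset.card_filter, Finset.card_filter, Finset.card_filter,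
    Finset.card_filter, ← Finset.sum_add_distrib, ← Finset.sum_add_distrib]
  refine Finset.sum_congr rfl fun v _ => ?_
  by_cases hadj : G.Adj u v
  · rcases lt_trichotomy (dly G c v) (dly G c u) with h | h | h
    · simp [hadj, h, Nat.lt_asymm h, Nat.ne_of_lt h]
    · simp [hadj, h]
    · simp [hadj, h, Nat.lt_asymm h, (Nat.ne_of_lt h).symm]
  · simp [hadj]

lemma sum_ddeg_eq_sum_udeg (G : SimpleGraph V) (c : Fin l → V) :
    ∑ u, ddeg G c u = ∑ u, udeg G c u := by
  simp only [ddeg, udeg, Finset.card_filter]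
  rw [Finset.sum_comm]
  refine Finset.sum_congr rfl fun u _ => Finset.sum_congr rfl fun v _ => ?_
  by_cases hadj : G.Adj u v
  · rw [G.adj_comm] at hadj
    simp [hadj, hadj.symm]
  · have : ¬ G.Adj v u := fun hc => hadj hc.symm
    simp [hadj, this]

end Cyc

section Cyc2

variable {l : ℕ} [NeZero l] {c : Fin l → V} {G : SimpleGraph V}

open Fin.CommRing in
lemma two_ne_zero_fin (hl : 3 ≤ l) : ((2:ℕ) : Fin l) ≠ 0 := by
  intro h
  have hval := congrArg Fin.val h
  rw [Fin.val_natCast] at hval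
  have h2 : 2 % l = 2 := Nat.mod_eq_of_lt (by omega)
  rw [h2] at hval
  simp at hval

open Fin.CommRing in
lemma fin_shift_ne (hl : 3 ≤ l) (k : Fin l) : (k + 1 : Fin l) ≠ k - 1 := by
  intro h
  apply two_ne_zero_fin hl
  have h0 : (k + 1) - (k - 1) = (2 : Fin l) := by ring
  rw [h] at h0
  rw [sub_self] at h0
  rw [show ((2:ℕ) : Fin l) = (2 : Fin l) from by norm_cast]
  exact h0.symm

lemma ddeg_pos (hconn : G.Connected) {u : V} (h : dly G c u ≠ 0) :
    1 ≤ ddeg G c u := by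
  obtain ⟨w, hadjw, hw⟩ := dly_down hconn u h
  have hlt : dly G c w < dly G c u := by omega
  have hmem : w ∈ Finset.univ.filter (fun v => G.Adj u v ∧ dly G c v < dly G c u) := by
    simp [hadjw, hlt]
  exact Finset.card_pos.mpr ⟨w, hmem⟩

lemma ddeg_zero {u : V} (h : dly G c u = 0) : ddeg G c u = 0 := by
  rw [ddeg, Finset.card_eq_zero]
  rw [Finset.filter_eq_empty_iff]
  intro v _
  rw [h]
  rintro ⟨_, hlt⟩
  exact Nat.not_lt_zero _ hlt

lemma hdeg_two_le (hconn : G.Connected) (hinj : Function.Injective c) (hl : 3 ≤ l)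
    (hadjc : ∀ i : Fin l, G.Adj (c i) (c (i + 1))) (k : Fin l) :
    2 ≤ hdeg G c (c k) := by
  have h1 : G.Adj (c k) (c (k + 1)) := hadjc k
  have h2 : G.Adj (c k) (c (k - 1)) := by
    have := hadjc (k - 1)
    rw [sub_add_cancel] at this
    exact this.symm
  have hne : c (k + 1) ≠ c (k - 1) := fun h => fin_shift_ne hl k (hinj h)
  have hsub : ({c (k + 1), c (k - 1)} : Finset V)
      ⊆ Finset.univ.filter (fun v => G.Adj (c k) v ∧ dly G c v = dly G c (c k)) := by
    intro v hv
    rcases Finset.mem_insert.mp hv with h | h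
    · subst h; simp [h1, dly_c]
    · rw [Finset.mem_singleton] at h; subst h; simp [h2, dly_c]
  have := Finset.card_le_card hsub
  rw [Finset.card_pair hne] at this
  exact this

lemma key_count (hconn : G.Connected) (hinj : Function.Injective c) (hl : 3 ≤ l)
    (hadjc : ∀ i : Fin l, G.Adj (c i) (c (i + 1)))
    (hedge : ∑ u, (Finset.univ.filter (fun v => G.Adj u v)).card = 2 * Fintype.card V)
    (u : V) : 2 * ddeg G c u + hdeg G c u = 2 := by
  have hsum : ∑ v, (2 * ddeg G c v + hdeg G c v) = ∑ v : V, 2 := by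
    have h1 : ∑ v, (2 * ddeg G c v + hdeg G c v)
        = ∑ v, (ddeg G c v + hdeg G c v + udeg G c v) := by
      rw [Finset.sum_add_distrib, Finset.sum_add_distrib, Finset.sum_add_distrib]
      rw [← sum_ddeg_eq_sum_udeg (G := G) (c := c)]
      have : ∑ v, 2 * ddeg G c v = ∑ v, ddeg G c v + ∑ v, ddeg G c v := by
        rw [← Finset.sum_add_distrib]
        exact Finset.sum_congr rfl fun v _ => by ring
      omega
    rw [h1, ← Finset.sum_congr rfl fun v (_ : v ∈ Finset.univ) => deg_split G c v]
    rw [hedge]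
    simp [Finset.card_univ]
    ring
  have hle : ∀ v ∈ Finset.univ, 2 ≤ 2 * ddeg G c v + hdeg G c v := by
    intro v _
    by_cases hz : dly G c v = 0
    · obtain ⟨k, hk⟩ := dly_eq_zero hconn v hz
      have := hdeg_two_le hconn hinj hl hadjc k
      rw [← hk] at this
      omega
    · have := ddeg_pos hconn hz
      omega
  have := (Finset.sum_eq_sum_iff_of_le hle).mp hsum.symm u (Finset.mem_univ u)
  omega

lemma no_horiz (hkey : ∀ u, 2 * ddeg G c u + hdeg G c u = 2) {u v : V}
    (hu : dly G c u ≠ 0) (hconn : G.Connected) (h : G.Adj u v) :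
    dly G c v ≠ dly G c u := by
  intro he
  have hdd := ddeg_pos hconn hu
  have hk := hkey u
  have hh0 : hdeg G c u = 0 := by omega
  have hmem : v ∈ Finset.univ.filter (fun z => G.Adj u z ∧ dly G c z = dly G c u) := by
    simp [h, he]
  have := Finset.card_pos.mpr ⟨v, hmem⟩
  rw [hdeg] at hh0
  omega

lemma down_unique (hkey : ∀ u, 2 * ddeg G c u + hdeg G c u = 2) (hconn : G.Connected)
    {u v v' : V} (hu : dly G c u ≠ 0)
    (h1 : G.Adj u v) (h2 : dly G c v < dly G c u)
    (h1' : G.Adj u v') (h2' : dly G c v' < dly G c u) : v = v' := by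
  have hdd1 := ddeg_pos hconn hu
  have hk := hkey u
  have hdd : ddeg G c u = 1 := by omega
  have hcard : (Finset.univ.filter (fun z => G.Adj u z ∧ dly G c z < dly G c u)).card ≤ 1 :=
    le_of_eq hdd
  have hm1 : v ∈ Finset.univ.filter (fun z => G.Adj u z ∧ dly G c z < dly G c u) := by
    simp [h1, h2]
  have hm2 : v' ∈ Finset.univ.filter (fun z => G.Adj u z ∧ dly G c z < dly G c u) := by
    simp [h1', h2']
  exact Finset.card_le_one.mp hcard v hm1 v' hm2

lemma zero_adj (hkey : ∀ u, 2 * ddeg G c u + hdeg G c u = 2) (hconn : G.Connected)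
    (hinj : Function.Injective c) (hl : 3 ≤ l)
    (hadjc : ∀ i : Fin l, G.Adj (c i) (c (i + 1))) (k : Fin l)
    {v : V} (hadj0 : G.Adj (c k) v) (hv : dly G c v = 0) :
    v = c (k + 1) ∨ v = c (k - 1) := by
  have hdd : ddeg G c (c k) = 0 := ddeg_zero (dly_c G c k)
  have hk := hkey (c k)
  have hh2 : hdeg G c (c k) = 2 := by omega
  have h1 : G.Adj (c k) (c (k + 1)) := hadjc k
  have h2 : G.Adj (c k) (c (k - 1)) := by
    have := hadjc (k - 1)
    rw [sub_add_cancel] at this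
    exact this.symm
  have hne : c (k + 1) ≠ c (k - 1) := fun h => fin_shift_ne hl k (hinj h)
  have hsub : ({c (k + 1), c (k - 1)} : Finset V)
      ⊆ Finset.univ.filter (fun z => G.Adj (c k) z ∧ dly G c z = dly G c (c k)) := by
    intro z hz
    rcases Finset.mem_insert.mp hz with h | h
    · subst h; simp [h1, dly_c]
    · rw [Finset.mem_singleton] at h; subst h; simp [h2, dly_c]
  have heq : ({c (k + 1), c (k - 1)} : Finset V)
      = Finset.univ.filter (fun z => G.Adj (c k) z ∧ dly G c z = dly G c (c k)) := by
    apply Finset.eq_of_subset_of_card_le hsub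
    rw [Finset.card_pair hne]
    exact le_of_eq hh2
  have hmem : v ∈ Finset.univ.filter
      (fun z => G.Adj (c k) z ∧ dly G c z = dly G c (c k)) := by
    simp [hadj0, hv, dly_c]
  rw [← heq] at hmem
  rcases Finset.mem_insert.mp hmem with h | h
  · exact Or.inl h
  · exact Or.inr (Finset.mem_singleton.mp h)

lemma lap_dly (hconn : G.Connected)
    (hkey : ∀ u, 2 * ddeg G c u + hdeg G c u = 2) (u : V) :
    (lap G *ᵥ (fun z => (dly G c z : ℝ))) u = 2 - degR G u := by
  rw [lap_mulVec]
  have hsplitv : ∀ v, (if G.Adj u v then ((dly G c v : ℝ)) else 0)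
      = (if G.Adj u v ∧ dly G c v < dly G c u then ((dly G c u : ℝ) - 1) else 0)
        + (if G.Adj u v ∧ dly G c v = dly G c u then (dly G c u : ℝ) else 0)
        + (if G.Adj u v ∧ dly G c u < dly G c v then ((dly G c u : ℝ) + 1) else 0) := by
    intro v
    by_cases hadjv : G.Adj u v
    · rcases lt_trichotomy (dly G c v) (dly G c u) with h | h | h
      · have hlip : dly G c u ≤ dly G c v + 1 := dly_lipschitz hconn hadjv.symm
        have hcast : (dly G c v : ℝ) = (dly G c u : ℝ) - 1 := by
          have h1 : dly G c v + 1 = dly G c u := by omega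
          have := congrArg (fun t : ℕ => (t : ℝ)) h1
          push_cast at this
          linarith
        simp [hadjv, h, Nat.lt_asymm h, Nat.ne_of_lt h, hcast]
      · have hcast : (dly G c v : ℝ) = (dly G c u : ℝ) := by rw [h]
        simp [hadjv, h, hcast]
      · have hlip : dly G c v ≤ dly G c u + 1 := dly_lipschitz hconn hadjv
        have hcast : (dly G c v : ℝ) = (dly G c u : ℝ) + 1 := by
          have h1 : dly G c v = dly G c u + 1 := by omega
          rw [h1]; push_cast; ring
        simp [hadjv, h, Nat.lt_asymm h, (Nat.ne_of_lt h).symm, hcast]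
    · simp [hadjv]
  rw [Finset.sum_congr rfl fun v _ => hsplitv v, Finset.sum_add_distrib,
    Finset.sum_add_distrib]
  have hs1 : ∑ v, (if G.Adj u v ∧ dly G c v < dly G c u then ((dly G c u : ℝ) - 1) else 0)
      = (ddeg G c u : ℝ) * ((dly G c u : ℝ) - 1) := by
    rw [← Finset.sum_filter, Finset.sum_const, nsmul_eq_mul, ddeg]
  have hs2 : ∑ v, (if G.Adj u v ∧ dly G c v = dly G c u then (dly G c u : ℝ) else 0)
      = (hdeg G c u : ℝ) * (dly G c u : ℝ) := by
    rw [← Finset.sum_filter, Finset.sum_const, nsmul_eq_mul, hdeg]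
  have hs3 : ∑ v, (if G.Adj u v ∧ dly G c u < dly G c v then ((dly G c u : ℝ) + 1) else 0)
      = (udeg G c u : ℝ) * ((dly G c u : ℝ) + 1) := by
    rw [← Finset.sum_filter, Finset.sum_const, nsmul_eq_mul, udeg]
  rw [hs1, hs2, hs3]
  have hdeg_eq : degR G u = (ddeg G c u : ℝ) + (hdeg G c u : ℝ) + (udeg G c u : ℝ) := by
    rw [degR, deg_split G c u]
    push_cast
    ring
  have hkR : 2 * (ddeg G c u : ℝ) + (hdeg G c u : ℝ) = 2 := by exact_mod_cast hkey u
  rw [hdeg_eq]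
  linear_combination hkR
set_option maxHeartbeats 1000000 in
lemma branch_dist (hconn : G.Connected) (hinj : Function.Injective c) (hl : 3 ≤ l)
    (hadjc : ∀ i : Fin l, G.Adj (c i) (c (i + 1)))
    (hkey : ∀ u, 2 * ddeg G c u + hdeg G c u = 2) (i : Fin l) :
    ∀ (x : V) (w : (G.deleteEdges (cycleEdges c)).Walk x (c i)),
      G.dist x (c i) = dly G c x := by
  suffices H : ∀ (x z : V) (w : (G.deleteEdges (cycleEdges c)).Walk x z) (i : Fin l),
      z = c i → G.dist x (c i) = dly G c x by
    intro x w
    exact H x (c i) w i rfl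
  intro x z w
  induction w with
  | nil =>
    intro i hi
    rw [hi, SimpleGraph.dist_self, dly_c]
  | @cons a b _ hab p ih =>
    intro i hi
    have ihh := ih i hi
    have hab' : G.Adj a b := (SimpleGraph.deleteEdges_adj.mp hab).1
    have hnotcyc : s(a, b) ∉ cycleEdges c := (SimpleGraph.deleteEdges_adj.mp hab).2
    have hlip1 : dly G c b ≤ dly G c a + 1 := dly_lipschitz hconn hab'
    have hlip2 : dly G c a ≤ dly G c b + 1 := dly_lipschitz hconn hab'.symm
    have hle : dly G c a ≤ G.dist a (c i) := dly_le G c a i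
    rcases lt_trichotomy (dly G c a) (dly G c b) with hlt | heq | hgt
    · -- a is the unique down-neighbor of b
      have hbne : dly G c b ≠ 0 := by omega
      have hbnec : b ≠ c i := by
        intro he
        rw [he, dly_c] at hbne
        exact hbne rfl
      obtain ⟨w', hadjw, hw', _⟩ := dist_pred hconn hbnec
      have hdw' : G.dist w' (c i) = dly G c b - 1 := by rw [hw', ihh]
      have hdlyw' : dly G c w' = dly G c b - 1 := by
        have h1 : dly G c w' ≤ G.dist w' (c i) := dly_le G c w' i
        have h2 : dly G c b ≤ dly G c w' + 1 := dly_lipschitz hconn hadjw.symm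
        omega
      have haw' : a = w' := by
        refine down_unique hkey hconn hbne hab'.symm (by omega) hadjw (by omega)
      rw [haw', hdw', hdlyw']
    · by_cases hz : dly G c a = 0
      · have hbz : dly G c b = 0 := by omega
        have hbci : b = c i := by
          have h0 : G.dist b (c i) = 0 := by rw [ihh, hbz]
          rcases SimpleGraph.dist_eq_zero_iff_eq_or_not_reachable.mp h0 with h | h
          · exact h
          · exact absurd (hconn.preconnected b (c i)) h
        have hadjci : G.Adj (c i) a := by rw [← hbci]; exact hab'.symm
        rcases zero_adj hkey hconn hinj hl hadjc i hadjci hz with h1 | h1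
        · refine absurd (show s(a, b) ∈ cycleEdges c from ?_) hnotcyc
          rw [h1, hbci, Sym2.eq_swap]
          exact Set.mem_range.mpr ⟨i, rfl⟩
        · refine absurd (show s(a, b) ∈ cycleEdges c from ?_) hnotcyc
          rw [h1, hbci]
          exact Set.mem_range.mpr ⟨i - 1, by rw [sub_add_cancel]⟩
      · exact absurd heq.symm (no_horiz hkey hz hconn hab')
    · have h1 : G.dist a (c i) ≤ G.dist a b + G.dist b (c i) := hconn.dist_triangle
      have h2 : G.dist a b ≤ 1 := by
        have := SimpleGraph.dist_le (SimpleGraph.Walk.cons hab' SimpleGraph.Walk.nil)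
        simpa using this
      rw [ihh] at h1
      omega

end Cyc2

end UniAux

open UniAux Matrix

/-- For an `n`-vertex unicyclic graph `G` with `x ∈ V(T_i)` and
`y ∈ V(T_j)`, `H_{xy} = n·r(x,y) + R(y) − R(x) + d(y,v_j) − d(x,v_i)`. -/
theorem hitting_unicyclic [Fintype V] (G : SimpleGraph V) (n l : ℕ) [NeZero l]
    (hn : Fintype.card V = n) (hconn : G.Connected) (huni : esize G = n)
    (hl : 3 ≤ l) (c : Fin l → V) (hinj : Function.Injective c)
    (hadj : ∀ i : Fin l, G.Adj (c i) (c (i + 1)))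
    (i j : Fin l) (x y : V)
    (hx : (G.deleteEdges (cycleEdges c)).Reachable (c i) x)
    (hy : (G.deleteEdges (cycleEdges c)).Reachable (c j) y) :
    hitting G x y = (n : ℝ) * eres G x y + Rres G y - Rres G x
      + (G.dist y (c j) : ℝ) - (G.dist x (c i) : ℝ) := by

  classical
  have hcl : l ≤ Fintype.card V := by
    have := Fintype.card_le_of_injective c hinj
    simpa using this
  have hc2 : 1 < Fintype.card V := by omega
  have hdegdef : ∀ u, (Finset.univ.filter (fun v => G.Adj u v)).card = G.degree u := by
    intro u
    rw [SimpleGraph.degree, SimpleGraph.neighborFinset_eq_filter]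
  have hedgecard : G.edgeFinset.card = n := by
    rw [SimpleGraph.edgeFinset_card, ← Nat.card_eq_fintype_card]
    exact huni
  have hedge : ∑ u, (Finset.univ.filter (fun v => G.Adj u v)).card
      = 2 * Fintype.card V := by
    rw [Finset.sum_congr rfl fun u _ => hdegdef u,
      SimpleGraph.sum_degrees_eq_twice_card_edges, hedgecard, hn]
  have hkey := key_count hconn hinj hl hadj hedge
  have hhand : ∑ z, degR G z = 2 * (Fintype.card V : ℝ) := by
    have h1 : ∑ z, degR G z
        = ((∑ z, (Finset.univ.filter (fun v => G.Adj z v)).card : ℕ) : ℝ) := by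
      rw [Nat.cast_sum]
      rfl
    rw [h1, hedge]
    push_cast
    ring
  have hRres : ∀ a : V, Rres G a = (Fintype.card V : ℝ) * Nmat G hconn a a
      + (∑ z, Nmat G hconn z z) - 2 := by
    intro a
    rw [Rres, Finset.sum_congr rfl fun z _ => eres_eq_resist hconn a z]
    show ∑ z, resist G hconn a z = _
    simp only [resist]
    rw [Finset.sum_sub_distrib, Finset.sum_add_distrib, Finset.sum_const,
      ← Finset.mul_sum, sum_Nmat hconn a, Finset.card_univ]
    simp only [nsmul_eq_mul]
    ring
  set p : V → ℝ := (Nf G hconn).symm (degR G) with hpdef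
  set dR : V → ℝ := fun z => (dly G c z : ℝ) with hdR
  have hg : (Nf G hconn).symm (fun z => degR G z - 2)
      = p - (2:ℝ) • (fun _ => (1:ℝ)) := by
    have hfun : (fun z => degR G z - 2) = degR G - (2:ℝ) • (fun _ : V => (1:ℝ)) := by
      funext z; simp [smul_eq_mul]
    rw [hfun, map_sub, _root_.map_smul, Nf_ones hconn, hpdef]
  have hsum0 : ∑ z, (degR G z - 2) = 0 := by
    rw [Finset.sum_sub_distrib, hhand, Finset.sum_const, Finset.card_univ, nsmul_eq_mul]
    ring
  have hlapg : lap G *ᵥ ((Nf G hconn).symm (fun z => degR G z - 2))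
      = (fun z => degR G z - 2) := lap_mulVec_Nf hconn hsum0
  have hlapd : lap G *ᵥ dR = fun u => 2 - degR G u :=
    funext fun u => lap_dly hconn hkey u
  have hψ : lap G *ᵥ ((Nf G hconn).symm (fun z => degR G z - 2) + dR) = 0 := by
    rw [Matrix.mulVec_add, hlapg, hlapd]
    funext u
    simp
  have hconst := const_of_lap_zero hconn hψ x y
  have hpq : p x - p y = dR y - dR x := by
    rw [hg] at hconst
    simp only [Pi.add_apply, Pi.sub_apply, Pi.smul_apply, smul_eq_mul] at hconst
    linarith
  obtain ⟨wx⟩ := hx.symm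
  obtain ⟨wy⟩ := hy.symm
  have hdx : G.dist x (c i) = dly G c x := branch_dist hconn hinj hl hadj hkey i x wx
  have hdy : G.dist y (c j) = dly G c y := branch_dist hconn hinj hl hadj hkey j y wy
  have hmaster := hitting_master hconn hc2 hhand x y
  have hncast : ((n : ℕ) : ℝ) = (Fintype.card V : ℝ) := by rw [← hn]
  rw [hmaster, eres_eq_resist hconn x y, hRres y, hRres x, hdx, hdy, hncast, resist]
  have hdRx : (dly G c x : ℝ) = dR x := rfl
  have hdRy : (dly G c y : ℝ) = dR y := rfl
  rw [hdRx, hdRy]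
  linear_combination hpq
end
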